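/- arXiv:1201.1996 — 2 statements merged into one kernel-verified Lean document; each statement's English description precedes it below -/
import Mathlib

section
/- Let ε > 0 and let (ρ_n)_{n≥1} be a sequence of [0,1]∪{∞}-valued stopping times with P(ρ_n = ∞) ≥ 1 − ε for all n. Then there exist a [0,1]∪{∞}-valued stopping time ρ with P(ρ = ∞) ≥ 1 − 3ε and, for each n ≥ 1, an integer N_n ≥ n and nonnegative convex weights μ_n^n, …, μ_{N_n}^n summing to 1, such that for all n ≥ 1 the pointwise inequality 1_{[0,ρ]} ≤ 2 Σ_{k=n}^{N_n} μ_k^n · 1_{[0,ρ_k]} holds (as functions of (t, ω)). -/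
set_option linter.unusedSectionVars false
set_option linter.unusedVariables false
set_option maxHeartbeats 1000000


open MeasureTheory Set Filter Topology

noncomputable section

namespace BD

variable {Ω : Type*} {m0 : MeasurableSpace Ω}

/-- The filtration is right-continuous. -/
def RightContinuousFiltration (ℱ : Filtration ℝ m0) : Prop :=
  ∀ t : ℝ, ℱ t = ⨅ s ∈ Set.Ioi t, ℱ s

/-- `ℱ 0` contains all `P`-null sets. -/
def CompleteFiltration (ℱ : Filtration ℝ m0) (P : Measure Ω) : Prop :=
  ∀ s : Set Ω, P s = 0 → MeasurableSet[ℱ 0] s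

/-- The usual conditions: right continuity and completeness. -/
def UsualConditions (ℱ : Filtration ℝ m0) (P : Measure Ω) : Prop :=
  RightContinuousFiltration ℱ ∧ CompleteFiltration ℱ P

/-- A real function is càdlàg on the time interval `[0,1]`: it is right-continuous on `[0,1)`
and has left limits on `(0,1]`. -/
def IsCadlagFun (f : ℝ → ℝ) : Prop :=
  (∀ t ∈ Set.Ico (0:ℝ) 1, ContinuousWithinAt f (Set.Ici t) t) ∧
  (∀ t ∈ Set.Ioc (0:ℝ) 1, ∃ l : ℝ, Tendsto f (nhdsWithin t (Set.Iio t)) (nhds l))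

/-- A process is càdlàg if all its paths are càdlàg on `[0,1]`. -/
def Cadlag (S : ℝ → Ω → ℝ) : Prop := ∀ ω, IsCadlagFun fun t => S t ω

/-- The process is adapted on the time interval `[0,1]`. -/
def AdaptedOn (ℱ : Filtration ℝ m0) (S : ℝ → Ω → ℝ) : Prop :=
  ∀ t ∈ Set.Icc (0:ℝ) 1, StronglyMeasurable[ℱ t] (S t)

/-- A `[0,1] ∪ {∞}`-valued random time (modelled as a `WithTop ℝ`-valued map) is a stopping
time if `{ρ ≤ t} ∈ ℱ t` for every `t`. -/
def IsStoppingTimeTop (ℱ : Filtration ℝ m0) (ρ : Ω → WithTop ℝ) : Prop :=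
  ∀ t : ℝ, MeasurableSet[ℱ t] {ω | ρ ω ≤ (t : WithTop ℝ)}

/-- The random time takes values in `[0,1] ∪ {∞}`. -/
def ValuedInUnitOrTop (ρ : Ω → WithTop ℝ) : Prop :=
  ∀ ω, ρ ω = ⊤ ∨ ∃ t ∈ Set.Icc (0:ℝ) 1, ρ ω = (t : WithTop ℝ)

/-- The process `S` stopped at the (possibly infinite) random time `ρ`. -/
def stopped (S : ℝ → Ω → ℝ) (ρ : Ω → WithTop ℝ) : ℝ → Ω → ℝ :=
  fun t ω => S (WithTop.untopD t (min (t : WithTop ℝ) (ρ ω))) ω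

/-- A simple integrand `H = ∑_{i=1}^k H^i 1_{(τ_i, τ_{i+1}]}` where the `τ_i` are `[0,1]`-valued
stopping times, increasing in `i`, and `H^i` is bounded and `ℱ_{τ_i}`-measurable. -/
structure SimpleIntegrand (ℱ : Filtration ℝ m0) where
  k : ℕ
  τ : Fin (k + 1) → Ω → ℝ
  τ_mono : ∀ ω, Monotone fun i => τ i ω
  τ_mem : ∀ i ω, τ i ω ∈ Set.Icc (0:ℝ) 1
  τ_stopping : ∀ i, IsStoppingTime ℱ (fun ω => (τ i ω : WithTop ℝ))
  H : Fin k → Ω → ℝ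
  H_bdd : ∀ i, ∃ C : ℝ, ∀ ω, |H i ω| ≤ C
  H_meas : ∀ i : Fin k,
    StronglyMeasurable[(τ_stopping i.castSucc).measurableSpace] (H i)

/-- The value of a simple integrand at time `t`. -/
def SimpleIntegrand.val {ℱ : Filtration ℝ m0} (Hs : SimpleIntegrand ℱ) (t : ℝ) (ω : Ω) : ℝ :=
  ∑ i : Fin Hs.k, if Hs.τ i.castSucc ω < t ∧ t ≤ Hs.τ i.succ ω then Hs.H i ω else 0

/-- `c` is a uniform (sup-norm) bound for the simple integrand. -/
def SimpleIntegrand.BddBy {ℱ : Filtration ℝ m0} (Hs : SimpleIntegrand ℱ) (c : ℝ) : Prop :=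
  ∀ t ω, |Hs.val t ω| ≤ c

/-- The elementary stochastic integral `I_S(H) = ∑ H^i (S_{τ_{i+1}} - S_{τ_i})`. -/
def elemIntegral {ℱ : Filtration ℝ m0} (S : ℝ → Ω → ℝ) (Hs : SimpleIntegrand ℱ) (ω : Ω) : ℝ :=
  ∑ i : Fin Hs.k, Hs.H i ω * (S (Hs.τ i.succ ω) ω - S (Hs.τ i.castSucc ω) ω)

/-- `S` is a good integrator: `I_S` is continuous from the simple integrands (with the sup norm)
to `L⁰(P)`, i.e. `‖Hⁿ‖_∞ → 0` implies `I_S(Hⁿ) → 0` in probability. -/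
def GoodIntegrator (ℱ : Filtration ℝ m0) (P : Measure Ω) (S : ℝ → Ω → ℝ) : Prop :=
  ∀ (Hs : ℕ → SimpleIntegrand ℱ) (c : ℕ → ℝ),
    (∀ n, (Hs n).BddBy (c n)) → Tendsto c atTop (nhds 0) →
    TendstoInMeasure P (fun n => elemIntegral S (Hs n)) atTop 0

/-- A submartingale on the time interval `[0,1]`. -/
def SubmartingaleOn (ℱ : Filtration ℝ m0) (P : Measure Ω) (Y : ℝ → Ω → ℝ) : Prop :=
  AdaptedOn ℱ Y ∧ (∀ t ∈ Set.Icc (0:ℝ) 1, Integrable (Y t) P) ∧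
    ∀ s t : ℝ, s ∈ Set.Icc (0:ℝ) 1 → t ∈ Set.Icc (0:ℝ) 1 → s ≤ t →
      ∀ᵐ ω ∂P, Y s ω ≤ (P[Y t | ℱ s]) ω

/-- A martingale on the time interval `[0,1]`. -/
def MartingaleOn (ℱ : Filtration ℝ m0) (P : Measure Ω) (Y : ℝ → Ω → ℝ) : Prop :=
  AdaptedOn ℱ Y ∧ (∀ t ∈ Set.Icc (0:ℝ) 1, Integrable (Y t) P) ∧
    ∀ s t : ℝ, s ∈ Set.Icc (0:ℝ) 1 → t ∈ Set.Icc (0:ℝ) 1 → s ≤ t →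
      (P[Y t | ℱ s]) =ᵐ[P] Y s

/-- A local martingale on `[0,1]`: for every `ε > 0` there is a `[0,1] ∪ {∞}`-valued stopping
time `ρ` with `P(ρ = ∞) ≥ 1 - ε` such that the stopped process is a martingale. -/
def IsLocalMartingaleOn (ℱ : Filtration ℝ m0) (P : Measure Ω) (M : ℝ → Ω → ℝ) : Prop :=
  ∀ ε : ℝ, 0 < ε → ∃ ρ : Ω → WithTop ℝ, IsStoppingTimeTop ℱ ρ ∧ ValuedInUnitOrTop ρ ∧
    1 - ENNReal.ofReal ε ≤ P {ω | ρ ω = ⊤} ∧ MartingaleOn ℱ P (stopped M ρ)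

/-- All paths of the process have finite total variation on `[0,1]`. -/
def FiniteVariationPaths (A : ℝ → Ω → ℝ) : Prop :=
  ∀ ω, BoundedVariationOn (fun t => A t ω) (Set.Icc (0:ℝ) 1)

/-- `S` is a semimartingale on `[0,1]`: it is (up to indistinguishability on `[0,1]`) the sum
of a càdlàg local martingale and a càdlàg adapted process of finite variation. -/
def IsSemimartingaleOn (ℱ : Filtration ℝ m0) (P : Measure Ω) (S : ℝ → Ω → ℝ) : Prop :=
  ∃ M A : ℝ → Ω → ℝ, Cadlag M ∧ IsLocalMartingaleOn ℱ P M ∧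
    Cadlag A ∧ AdaptedOn ℱ A ∧ FiniteVariationPaths A ∧
    ∀ᵐ ω ∂P, ∀ t ∈ Set.Icc (0:ℝ) 1, S t ω = M t ω + A t ω

/-- A partition `0 = t_0 < t_1 < … < t_n = 1` of `[0,1]`. -/
structure Partition where
  n : ℕ
  t : Fin (n + 1) → ℝ
  strictMono : StrictMono t
  first : t 0 = 0
  last : t (Fin.last n) = 1

/-- The mean variation `Var(S, π) = E ∑_i |E[S_{t_{i+1}} - S_{t_i} | ℱ_{t_i}]|` of `S`
along the partition `π`. -/
def meanVar (ℱ : Filtration ℝ m0) (P : Measure Ω) (S : ℝ → Ω → ℝ) (π : Partition) : ℝ :=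
  ∑ i : Fin π.n,
    ∫ ω, |(P[fun ω => S (π.t i.succ) ω - S (π.t i.castSucc) ω | ℱ (π.t i.castSucc)]) ω| ∂P

/-- The `n`-th dyadic partition `{0, 1/2ⁿ, …, 1}` of `[0,1]`. -/
def dyadicPartition (n : ℕ) : Partition where
  n := 2 ^ n
  t := fun i => (i.val : ℝ) / 2 ^ n
  strictMono := by
    intro i j hij
    have h2 : (0:ℝ) < 2 ^ n := by positivity
    have h : (i.val : ℝ) < (j.val : ℝ) := by exact_mod_cast hij
    exact div_lt_div_of_pos_right h h2
  first := by simp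
  last := by
    have h2 : (2:ℝ) ^ n ≠ 0 := by positivity
    simp [Fin.last, h2]

/-- The Riemann sum `∑_{i=0}^{2ⁿ-1} H_{i/2ⁿ} (S_{(i+1)/2ⁿ} - S_{i/2ⁿ})`. -/
def riemannSum (S H : ℝ → Ω → ℝ) (n : ℕ) (ω : Ω) : ℝ :=
  ∑ i ∈ Finset.range (2 ^ n),
    H ((i : ℝ) / 2 ^ n) ω * (S (((i : ℝ) + 1) / 2 ^ n) ω - S ((i : ℝ) / 2 ^ n) ω)

/-- A bounded adapted process with continuous paths on `[0,1]`. -/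
def BddContAdapted (ℱ : Filtration ℝ m0) (H : ℝ → Ω → ℝ) : Prop :=
  (∃ C : ℝ, ∀ t ∈ Set.Icc (0:ℝ) 1, ∀ ω, |H t ω| ≤ C) ∧ AdaptedOn ℱ H ∧
    ∀ ω, ContinuousOn (fun t => H t ω) (Set.Icc (0:ℝ) 1)

/-- `S` is a Riemann integrator: for every bounded adapted continuous process `H`, the
Riemann sums along the dyadic partitions converge in probability. -/
def RiemannIntegrator (ℱ : Filtration ℝ m0) (P : Measure Ω) (S : ℝ → Ω → ℝ) : Prop :=
  ∀ H : ℝ → Ω → ℝ, BddContAdapted ℱ H →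
    ∃ L : Ω → ℝ, TendstoInMeasure P (fun n => riemannSum S H n) atTop L

/-- An element of `ℰ_{D_n}`: a process `∑_{i=0}^{2ⁿ-1} H^i 1_{(i/2ⁿ, (i+1)/2ⁿ]}` with `H⁰ = 0`
and `H^i` bounded and `ℱ_{(i-1)/2ⁿ}`-measurable for `1 ≤ i ≤ 2ⁿ - 1`. -/
structure DyadicIntegrand (ℱ : Filtration ℝ m0) where
  n : ℕ
  H : ℕ → Ω → ℝ
  H_zero : H 0 = fun _ => 0
  H_bdd : ∀ i, ∃ C : ℝ, ∀ ω, |H i ω| ≤ C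
  H_meas : ∀ i : ℕ, 1 ≤ i → i < 2 ^ n →
    StronglyMeasurable[ℱ (((i : ℝ) - 1) / 2 ^ n)] (H i)

/-- The elementary integral of an element of `ℰ_{D_n}` against `S`. -/
def dyadicIntegral {ℱ : Filtration ℝ m0} (S : ℝ → Ω → ℝ) (D : DyadicIntegrand ℱ) (ω : Ω) : ℝ :=
  ∑ i ∈ Finset.range (2 ^ D.n),
    D.H i ω * (S (((i : ℝ) + 1) / 2 ^ D.n) ω - S ((i : ℝ) / 2 ^ D.n) ω)

/-- `c` is a uniform bound for an element of `ℰ_{D_n}` (hence for its sup norm). -/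
def DyadicIntegrand.BddBy {ℱ : Filtration ℝ m0} (D : DyadicIntegrand ℱ) (c : ℝ) : Prop :=
  ∀ i < 2 ^ D.n, ∀ ω, |D.H i ω| ≤ c

/-- The jump `ΔS_t = S_t - S_{t-}` of the process `S` at time `t`. -/
def jump (S : ℝ → Ω → ℝ) (t : ℝ) (ω : Ω) : ℝ :=
  S t ω - Function.leftLim (fun s => S s ω) t

/-- The times `s ∈ (0, t]` at which `S` has a jump of size at least `1`. -/
def bigJumpTimes (S : ℝ → Ω → ℝ) (t : ℝ) (ω : Ω) : Set ℝ :=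
  {s : ℝ | s ∈ Set.Ioc (0:ℝ) t ∧ 1 ≤ |jump S s ω|}

/-- The sum of the big jumps: `J_t = ∑_{0 < s ≤ t} ΔS_s 1_{|ΔS_s| ≥ 1}`. -/
def bigJumpPart (S : ℝ → Ω → ℝ) (t : ℝ) (ω : Ω) : ℝ :=
  ∑ᶠ s ∈ bigJumpTimes S t ω, jump S s ω


private lemma bdd_integrable (P : Measure Ω) [IsProbabilityMeasure P]
    {g : Ω → ℝ} (hg : Measurable g) {C : ℝ} (hC : ∀ ω, |g ω| ≤ C) :
    Integrable g P :=
  (integrable_const C).mono' hg.aestronglyMeasurable (ae_of_all _ fun ω => by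
    simpa [Real.norm_eq_abs] using hC ω)

section Komlos

variable (A : ℕ → Set Ω)

private def kf (k : ℕ) : Ω → ℝ := (A k).indicator fun _ => (1:ℝ)

private lemma kf_mem (k : ℕ) (ω : Ω) : 0 ≤ kf A k ω ∧ kf A k ω ≤ 1 := by
  unfold kf
  by_cases h : ω ∈ A k <;> simp [h]

private def kS (n N : ℕ) (μ : ℕ → ℝ) : Ω → ℝ :=
  fun ω => ∑ k ∈ Finset.Icc n N, μ k * kf A k ω

private def kValid (n N : ℕ) (μ : ℕ → ℝ) : Prop :=
  n ≤ N ∧ (∀ k ∈ Finset.Icc n N, 0 ≤ μ k) ∧ ∑ k ∈ Finset.Icc n N, μ k = 1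

private lemma sum_ext {n N p Q : ℕ} (h : Finset.Icc n N ⊆ Finset.Icc p Q) (μ F : ℕ → ℝ) :
    ∑ k ∈ Finset.Icc p Q, (if k ∈ Finset.Icc n N then μ k else 0) * F k
      = ∑ k ∈ Finset.Icc n N, μ k * F k := by
  rw [← Finset.sum_subset h]
  · exact Finset.sum_congr rfl fun k hk => by rw [if_pos hk]
  · intro k _ hk; rw [if_neg hk, zero_mul]

private lemma sum_ext' {n N p Q : ℕ} (h : Finset.Icc n N ⊆ Finset.Icc p Q) (μ : ℕ → ℝ) :
    ∑ k ∈ Finset.Icc p Q, (if k ∈ Finset.Icc n N then μ k else 0)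
      = ∑ k ∈ Finset.Icc n N, μ k := by
  rw [← Finset.sum_subset h]
  · exact Finset.sum_congr rfl fun k hk => by rw [if_pos hk]
  · intro k _ hk; rw [if_neg hk]

private lemma kS_ext {n N p Q : ℕ} (h : Finset.Icc n N ⊆ Finset.Icc p Q) (μ : ℕ → ℝ) (ω : Ω) :
    kS A p Q (fun k => if k ∈ Finset.Icc n N then μ k else 0) ω = kS A n N μ ω :=
  sum_ext h μ _

private lemma kS_mem {n N : ℕ} {μ : ℕ → ℝ} (h : kValid n N μ) (ω : Ω) :
    0 ≤ kS A n N μ ω ∧ kS A n N μ ω ≤ 1 := by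
  obtain ⟨-, hpos, hsum⟩ := h
  constructor
  · exact Finset.sum_nonneg fun k hk => mul_nonneg (hpos k hk) (kf_mem A k ω).1
  · calc kS A n N μ ω ≤ ∑ k ∈ Finset.Icc n N, μ k :=
        Finset.sum_le_sum fun k hk =>
          mul_le_of_le_one_right (hpos k hk) (kf_mem A k ω).2
    _ = 1 := hsum

private lemma kS_meas (hA : ∀ k, MeasurableSet (A k)) (n N : ℕ) (μ : ℕ → ℝ) :
    Measurable (kS A n N μ) := by
  apply Finset.measurable_sum
  intro k _
  exact (measurable_const.indicator (hA k)).const_mul (μ k)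

variable (P : Measure Ω) [IsProbabilityMeasure P]

private lemma kS_sq_integrable (hA : ∀ k, MeasurableSet (A k)) {n N : ℕ} {μ : ℕ → ℝ}
    (h : kValid n N μ) : Integrable (fun ω => (kS A n N μ ω)^2) P := by
  apply bdd_integrable P ((kS_meas A hA n N μ).pow measurable_const) (C := 1)
  intro ω
  obtain ⟨h0, h1⟩ := kS_mem A h ω
  rw [abs_le]
  constructor <;> nlinarith

private lemma kS_integrable (hA : ∀ k, MeasurableSet (A k)) {n N : ℕ} {μ : ℕ → ℝ}
    (h : kValid n N μ) : Integrable (kS A n N μ) P := by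
  apply bdd_integrable P (kS_meas A hA n N μ) (C := 1)
  intro ω
  obtain ⟨h0, h1⟩ := kS_mem A h ω
  rw [abs_le]
  constructor <;> linarith

private def kV (n : ℕ) : Set ℝ :=
  {r | ∃ N μ, kValid n N μ ∧ r = ∫ ω, (kS A n N μ ω)^2 ∂P}

private lemma kValid_base (n : ℕ) : kValid n n (fun _ => (1:ℝ)) :=
  ⟨le_rfl, fun _ _ => zero_le_one, by simp⟩

private lemma kV_nonempty (n : ℕ) : (kV A P n).Nonempty :=
  ⟨_, n, fun _ => (1:ℝ), kValid_base n, rfl⟩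

private lemma kV_mem_Icc (hA : ∀ k, MeasurableSet (A k)) {n : ℕ} {r : ℝ}
    (hr : r ∈ kV A P n) : 0 ≤ r ∧ r ≤ 1 := by
  obtain ⟨N, μ, hval, rfl⟩ := hr
  constructor
  · exact integral_nonneg fun ω => sq_nonneg _
  · have hle : ∫ ω, (kS A n N μ ω)^2 ∂P ≤ ∫ _, (1:ℝ) ∂P := by
      apply integral_mono (kS_sq_integrable A P hA hval) (integrable_const 1)
      intro ω
      obtain ⟨h0, h1⟩ := kS_mem A hval ω
      simp only []
      nlinarith
    simpa using hle

private def ka (n : ℕ) : ℝ := sInf (kV A P n)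

private lemma kV_bddBelow (hA : ∀ k, MeasurableSet (A k)) (n : ℕ) : BddBelow (kV A P n) :=
  ⟨0, fun r hr => (kV_mem_Icc A P hA hr).1⟩

private lemma ka_nonneg (hA : ∀ k, MeasurableSet (A k)) (n : ℕ) : 0 ≤ ka A P n :=
  le_csInf (kV_nonempty A P n) fun r hr => (kV_mem_Icc A P hA hr).1

private lemma ka_le_one (hA : ∀ k, MeasurableSet (A k)) (n : ℕ) : ka A P n ≤ 1 := by
  obtain ⟨r, hr⟩ := kV_nonempty A P n
  exact le_trans (csInf_le (kV_bddBelow A P hA n) hr) (kV_mem_Icc A P hA hr).2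

private lemma kV_anti (n : ℕ) : kV A P (n+1) ⊆ kV A P n := by
  rintro r ⟨N, μ, ⟨hnN, hpos, hsum⟩, rfl⟩
  have hsub : Finset.Icc (n+1) N ⊆ Finset.Icc n N :=
    Finset.Icc_subset_Icc (Nat.le_succ n) le_rfl
  refine ⟨N, fun k => if k ∈ Finset.Icc (n+1) N then μ k else 0,
    ⟨le_trans (Nat.le_succ n) hnN, ?_, ?_⟩, ?_⟩
  · intro k _
    show (0:ℝ) ≤ if k ∈ Finset.Icc (n+1) N then μ k else 0
    split
    · exact hpos k ‹_›
    · exact le_rfl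
  · rw [sum_ext' hsub]; exact hsum
  · congr 1
    funext ω
    rw [kS_ext A hsub]

private lemma ka_mono (hA : ∀ k, MeasurableSet (A k)) : Monotone (ka A P) := by
  apply monotone_nat_of_le_succ
  intro n
  exact csInf_le_csInf (kV_bddBelow A P hA n) (kV_nonempty A P (n+1)) (kV_anti A P n)

private def kaSup : ℝ := ⨆ n, ka A P n

private lemma ka_le_kaSup (hA : ∀ k, MeasurableSet (A k)) (n : ℕ) : ka A P n ≤ kaSup A P :=
  le_ciSup ⟨1, by rintro r ⟨n, rfl⟩; exact ka_le_one A P hA n⟩ n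

private lemma kaSup_exists (hA : ∀ k, MeasurableSet (A k)) {δ : ℝ} (hδ : 0 < δ) :
    ∃ n, kaSup A P - ka A P n ≤ δ := by
  have h : kaSup A P - δ < ⨆ n, ka A P n := by
    have := ka_le_kaSup A P hA 0
    simp only [kaSup] at *
    linarith [sub_lt_self (kaSup A P) hδ]
  obtain ⟨n, hn⟩ := exists_lt_of_lt_ciSup h
  exact ⟨n, by linarith⟩

private lemma kKey (hA : ∀ k, MeasurableSet (A k)) {n N m M : ℕ} {μ ν : ℕ → ℝ} (hnm : n ≤ m)
    (h1 : kValid n N μ) (h2 : kValid m M ν) :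
    ∫ ω, (kS A n N μ ω - kS A m M ν ω)^2 ∂P ≤
      2 * ∫ ω, (kS A n N μ ω)^2 ∂P + 2 * (∫ ω, (kS A m M ν ω)^2 ∂P) - 4 * ka A P n := by
  set Q := max N M with hQ
  have hsub1 : Finset.Icc n N ⊆ Finset.Icc n Q :=
    Finset.Icc_subset_Icc le_rfl (le_max_left _ _)
  have hsub2 : Finset.Icc m M ⊆ Finset.Icc n Q :=
    Finset.Icc_subset_Icc hnm (le_max_right _ _)
  set μ' : ℕ → ℝ := fun k => if k ∈ Finset.Icc n N then μ k else 0 with hμ'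
  set ν' : ℕ → ℝ := fun k => if k ∈ Finset.Icc m M then ν k else 0 with hν'
  set mid : ℕ → ℝ := fun k => (μ' k + ν' k)/2 with hmid
  have hmidval : ∀ ω, kS A n Q mid ω = (kS A n N μ ω + kS A m M ν ω) / 2 := by
    intro ω
    have e1 := sum_ext hsub1 μ (fun k => kf A k ω)
    have e2 := sum_ext hsub2 ν (fun k => kf A k ω)
    simp only [kS] at e1 e2 ⊢
    rw [← e1, ← e2, ← Finset.sum_add_distrib, Finset.sum_div]
    exact Finset.sum_congr rfl fun k _ => by simp only [hmid, hμ', hν']; ring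
  have hmidvalid : kValid n Q mid := by
    refine ⟨le_trans h1.1 (le_max_left _ _), ?_, ?_⟩
    · intro k _
      simp only [hmid, hμ', hν']
      have : (0:ℝ) ≤ μ' k := by
        simp only [hμ']; split
        · exact h1.2.1 k ‹_›
        · exact le_rfl
      have : (0:ℝ) ≤ ν' k := by
        simp only [hν']; split
        · exact h2.2.1 k ‹_›
        · exact le_rfl
      positivity
    · simp only [hmid, ← Finset.sum_div, Finset.sum_add_distrib]
      rw [sum_ext' hsub1, sum_ext' hsub2, h1.2.2, h2.2.2]
      norm_num
  have hmem : (∫ ω, (kS A n Q mid ω)^2 ∂P) ∈ kV A P n := ⟨Q, mid, hmidvalid, rfl⟩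
  have hge : ka A P n ≤ ∫ ω, (kS A n Q mid ω)^2 ∂P := csInf_le (kV_bddBelow A P hA n) hmem
  have hid : (fun ω => (kS A n N μ ω - kS A m M ν ω)^2)
      = fun ω => 2*(kS A n N μ ω)^2 + 2*(kS A m M ν ω)^2 - 4*(kS A n Q mid ω)^2 := by
    funext ω
    rw [hmidval ω]
    ring
  have i1 := kS_sq_integrable A P hA h1
  have i2 := kS_sq_integrable A P hA h2
  have i3 := kS_sq_integrable A P hA hmidvalid
  rw [hid, integral_sub (by exact (i1.const_mul 2).add (i2.const_mul 2)) (i3.const_mul 4),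
    integral_add (i1.const_mul 2) (i2.const_mul 2),
    integral_const_mul, integral_const_mul, integral_const_mul]
  linarith

private lemma komlos (P : Measure Ω) [IsProbabilityMeasure P]
    (hA : ∀ k, MeasurableSet (A k)) (ε : ℝ) (hε : 0 < ε)
    (hAP : ∀ k, 1 - ε ≤ (P (A k)).toReal) :
    ∃ (N : ℕ → ℕ) (μ : ℕ → ℕ → ℝ),
      (∀ n, n ≤ N n) ∧ (∀ n, ∀ k ∈ Finset.Icc n (N n), 0 ≤ μ n k) ∧
      (∀ n, ∑ k ∈ Finset.Icc n (N n), μ n k = 1) ∧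
      P {ω | ∃ n, ∑ k ∈ Finset.Icc n (N n), μ n k * kf A k ω < 1/2}
        ≤ ENNReal.ofReal (3 * ε) := by
  classical
  set η : ℕ → ℝ := fun i => (1/20) * (1/2)^i with hη
  have hηpos : ∀ i, 0 < η i := fun i => by rw [hη]; positivity
  set Tb : ℕ → ℝ := fun i => (ε/4) * (1/2)^i * (η i)^2 with hTb
  have hTbpos : ∀ i, 0 < Tb i := fun i => by
    rw [hTb]; have := hηpos i; positivity
  set γ : ℕ → ℝ := fun n => Tb n / 6 with hγ
  have hγpos : ∀ n, 0 < γ n := fun n => by rw [hγ]; have := hTbpos n; positivity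
  have hγanti : ∀ i j, i ≤ j → γ j ≤ γ i := by
    intro i j hij
    simp only [hγ, hTb, hη]
    have h2 : ((1:ℝ)/2)^j ≤ (1/2)^i :=
      pow_le_pow_of_le_one (by norm_num) (by norm_num) hij
    have h2' : (0:ℝ) ≤ (1/2)^j := by positivity
    have h3 : (((1:ℝ)/2)^j)^3 ≤ (((1:ℝ)/2)^i)^3 := pow_le_pow_left₀ h2' h2 3
    have h4 := mul_le_mul_of_nonneg_left h3 (le_of_lt (by positivity : (0:ℝ) < ε/9600))
    ring_nf at h4 ⊢
    linarith
  have hsel : ∀ n, ∃ N μ, kValid n N μ ∧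
      ∫ ω, (kS A n N μ ω)^2 ∂P < ka A P n + γ n := by
    intro n
    obtain ⟨r, hr, hlt⟩ := Real.lt_sInf_add_pos (kV_nonempty A P n) (hγpos n)
    obtain ⟨N, μ, hval, rfl⟩ := hr
    exact ⟨N, μ, hval, hlt⟩
  choose Ns μs hvalid hless using hsel
  choose nseq hnseq using fun i => kaSup_exists A P hA (hγpos i)
  set m : ℕ → ℕ := fun i => i + ∑ j ∈ Finset.range (i+1), nseq j with hm
  have hm_mono : Monotone m := by
    intro i j hij
    simp only [hm]
    exact add_le_add hij (Finset.sum_le_sum_of_subset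
      (Finset.range_subset_range.mpr (by omega)))
  have hm_ge : ∀ i, i ≤ m i := fun i => Nat.le_add_right i _
  have hm_nseq : ∀ i, nseq i ≤ m i := fun i =>
    le_trans (Finset.single_le_sum (f := nseq) (fun _ _ => Nat.zero_le _)
      (Finset.self_mem_range_succ i)) (Nat.le_add_left _ _)
  set g : ℕ → Ω → ℝ := fun i => kS A (m i) (Ns (m i)) (μs (m i)) with hg
  have hgval : ∀ i, kValid (m i) (Ns (m i)) (μs (m i)) := fun i => hvalid (m i)
  have hgmeas : ∀ i, Measurable (g i) := fun i => by
    rw [hg]; exact kS_meas A hA _ _ _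
  have hgmem : ∀ i ω, 0 ≤ g i ω ∧ g i ω ≤ 1 := fun i ω => by
    rw [hg]; exact kS_mem A (hgval i) ω
  have hgint : ∀ i, Integrable (g i) P := fun i => by
    rw [hg]; exact kS_integrable A P hA (hgval i)
  have hdiff : ∀ i, ∫ ω, (g i ω - g (i+1) ω)^2 ∂P ≤ Tb i := by
    intro i
    have hk := kKey A P hA (hm_mono (Nat.le_succ i)) (hgval i) (hgval (i+1))
    have h1 := hless (m i)
    have h2 := hless (m (i+1))
    have h4 : kaSup A P - ka A P (m i) ≤ γ i := by
      have ha := hnseq i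
      have hb := ka_mono A P hA (hm_nseq i)
      linarith
    have h5 : ka A P (m (i+1)) ≤ kaSup A P := ka_le_kaSup A P hA _
    have h6 : γ (m i) ≤ γ i := hγanti _ _ (hm_ge i)
    have h7 : γ (m (i+1)) ≤ γ (i+1) := hγanti _ _ (hm_ge (i+1))
    have h8 : γ (i+1) ≤ γ i := hγanti _ _ (Nat.le_succ i)
    have h9 : Tb i = 6 * γ i := by rw [hγ]; ring
    have hk' : ∫ ω, (g i ω - g (i+1) ω)^2 ∂P ≤
        2 * ∫ ω, (g i ω)^2 ∂P + 2 * (∫ ω, (g (i+1) ω)^2 ∂P) - 4 * ka A P (m i) := by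
      simp only [hg]; exact hk
    have h1' : ∫ ω, (g i ω)^2 ∂P < ka A P (m i) + γ (m i) := by
      simp only [hg]; exact h1
    have h2' : ∫ ω, (g (i+1) ω)^2 ∂P < ka A P (m (i+1)) + γ (m (i+1)) := by
      simp only [hg]; exact h2
    linarith
  have hindint : ∀ k, Integrable (kf A k) P := fun k =>
    bdd_integrable P (measurable_const.indicator (hA k)) (C := 1)
      (fun ω => by
        obtain ⟨a, b⟩ := kf_mem A k ω
        rw [abs_le]; constructor <;> linarith)
  have hmean : ∀ i, 1 - ε ≤ ∫ ω, g i ω ∂P := by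
    intro i
    obtain ⟨hnN, hpos, hsum⟩ := hgval i
    have heq : ∫ ω, g i ω ∂P
        = ∑ k ∈ Finset.Icc (m i) (Ns (m i)), μs (m i) k * (P (A k)).toReal := by
      simp only [hg, kS]
      rw [integral_finset_sum _ (fun k _ => (hindint k).const_mul _)]
      refine Finset.sum_congr rfl fun k _ => ?_
      rw [integral_const_mul]
      congr 1
      simp only [kf]
      rw [integral_indicator_const (1:ℝ) (hA k)]
      simp [Measure.real]
    rw [heq]
    calc (1:ℝ) - ε = ∑ k ∈ Finset.Icc (m i) (Ns (m i)), μs (m i) k * (1 - ε) := by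
          rw [← Finset.sum_mul, hsum, one_mul]
      _ ≤ _ := Finset.sum_le_sum fun k hk =>
          mul_le_mul_of_nonneg_left (hAP k) (hpos k hk)
  have hmarkov : ∀ (d : Ω → ℝ), Measurable d → (∀ ω, 0 ≤ d ω) → Integrable d P →
      ∀ c B : ℝ, 0 < c → (∫ ω, d ω ∂P) ≤ B →
      P {ω | c ≤ d ω} ≤ ENNReal.ofReal (B / c) := by
    intro d hmeas h0 hint c B hc hB
    have h := mul_meas_ge_le_integral_of_nonneg (ae_of_all _ h0) hint c
    have h2 : (P {ω | c ≤ d ω}).toReal ≤ B / c := by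
      rw [le_div_iff₀ hc]
      calc (P {ω | c ≤ d ω}).toReal * c = c * (P {ω | c ≤ d ω}).toReal := mul_comm _ _
        _ ≤ ∫ ω, d ω ∂P := h
        _ ≤ B := hB
    calc P {ω | c ≤ d ω} = ENNReal.ofReal (P {ω | c ≤ d ω}).toReal :=
          (ENNReal.ofReal_toReal (measure_ne_top _ _)).symm
      _ ≤ _ := ENNReal.ofReal_le_ofReal h2
  set bad0 : Set Ω := {ω | g 0 ω < 3/5} with hbad0
  set badi : ℕ → Set Ω := fun i => {ω | η i < |g i ω - g (i+1) ω|} with hbadi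
  have hPbad0 : P bad0 ≤ ENNReal.ofReal (ε / (2/5)) := by
    have hsub : bad0 ⊆ {ω | 2/5 ≤ 1 - g 0 ω} := by
      intro ω hω
      simp only [hbad0, mem_setOf_eq] at hω ⊢
      linarith
    refine le_trans (measure_mono hsub)
      (hmarkov (fun ω => 1 - g 0 ω) (measurable_const.sub (hgmeas 0))
        (fun ω => by
          show (0:ℝ) ≤ 1 - g 0 ω
          linarith [(hgmem 0 ω).2])
        ((integrable_const 1).sub (hgint 0)) _ _ (by norm_num) ?_)
    rw [integral_sub (integrable_const 1) (hgint 0)]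
    have := hmean 0
    simp only [integral_const, measure_univ, ENNReal.toReal_one, smul_eq_mul, one_mul, probReal_univ]
    linarith
  have hdint : ∀ i, Integrable (fun ω => (g i ω - g (i+1) ω)^2) P := by
    intro i
    apply bdd_integrable P (((hgmeas i).sub (hgmeas (i+1))).pow measurable_const) (C := 1)
    intro ω
    obtain ⟨a1, b1⟩ := hgmem i ω
    obtain ⟨a2, b2⟩ := hgmem (i+1) ω
    simp only [Pi.sub_apply]
    rw [abs_le]
    constructor <;> nlinarith
  have hPbadi : ∀ i, P (badi i) ≤ ENNReal.ofReal ((ε/4) * (1/2)^i) := by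
    intro i
    have hsub : badi i ⊆ {ω | (η i)^2 ≤ (g i ω - g (i+1) ω)^2} := by
      intro ω hω
      simp only [hbadi, mem_setOf_eq] at hω ⊢
      calc (η i)^2 ≤ |g i ω - g (i+1) ω|^2 := pow_le_pow_left₀ (hηpos i).le hω.le 2
        _ = _ := sq_abs _
    refine le_trans (measure_mono hsub) (le_trans
      (hmarkov (fun ω => (g i ω - g (i+1) ω)^2)
        (((hgmeas i).sub (hgmeas (i+1))).pow measurable_const)
        (fun ω => sq_nonneg _) (hdint i) ((η i)^2) (Tb i)
        (by have := hηpos i; positivity) (hdiff i)) ?_)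
    apply le_of_eq
    congr 1
    rw [hTb]
    exact mul_div_cancel_right₀ _ (by have := hηpos i; positivity)
  have hchain : ∀ ω, ω ∉ bad0 → (∀ i, ω ∉ badi i) → ∀ j, 1/2 ≤ g j ω := by
    intro ω h0 hi j
    simp only [hbad0, mem_setOf_eq, not_lt] at h0
    have key : ∀ j, 3/5 - (1/20) * ∑ i ∈ Finset.range j, (1/2:ℝ)^i ≤ g j ω := by
      intro j
      induction j with
      | zero => simpa using h0
      | succ j ih =>
        have hstep := hi j
        simp only [hbadi, mem_setOf_eq, not_lt] at hstep
        have hd : g j ω - g (j+1) ω ≤ η j := le_trans (le_abs_self _) hstep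
        rw [Finset.sum_range_succ]
        simp only [hη] at hd
        linarith
    have hone := key j
    have hgeo := sum_geometric_two_le j
    linarith
  refine ⟨fun n => Ns (m n),
    fun n k => if k ∈ Finset.Icc (m n) (Ns (m n)) then μs (m n) k else 0, ?_, ?_, ?_, ?_⟩
  · intro n; exact le_trans (hm_ge n) (hgval n).1
  · intro n k _
    show (0:ℝ) ≤ if k ∈ Finset.Icc (m n) (Ns (m n)) then μs (m n) k else 0
    split
    · exact (hgval n).2.1 k ‹_›
    · exact le_rfl
  · intro n
    rw [sum_ext' (Finset.Icc_subset_Icc (hm_ge n) le_rfl)]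
    exact (hgval n).2.2
  · have hEq : ∀ n (ω : Ω), ∑ k ∈ Finset.Icc n (Ns (m n)),
        (if k ∈ Finset.Icc (m n) (Ns (m n)) then μs (m n) k else 0) * kf A k ω = g n ω := by
      intro n ω
      rw [sum_ext (Finset.Icc_subset_Icc (hm_ge n) le_rfl)]
      rw [hg]
      rfl
    have hsub : {ω | ∃ n, ∑ k ∈ Finset.Icc n (Ns (m n)),
        (if k ∈ Finset.Icc (m n) (Ns (m n)) then μs (m n) k else 0) * kf A k ω < 1/2}
        ⊆ bad0 ∪ ⋃ i, badi i := by
      intro ω hω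
      by_contra hc
      simp only [mem_union, mem_iUnion, not_or, not_exists] at hc
      obtain ⟨n, hn⟩ := hω
      rw [hEq n ω] at hn
      exact absurd hn (not_lt.mpr (hchain ω hc.1 hc.2 n))
    calc P _ ≤ P (bad0 ∪ ⋃ i, badi i) := measure_mono hsub
      _ ≤ P bad0 + P (⋃ i, badi i) := measure_union_le _ _
      _ ≤ P bad0 + ∑' i, P (badi i) := add_le_add le_rfl (measure_iUnion_le _)
      _ ≤ ENNReal.ofReal (ε/(2/5)) + ∑' i, ENNReal.ofReal ((ε/4)*(1/2)^i) :=
          add_le_add hPbad0 (ENNReal.tsum_le_tsum hPbadi)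
      _ = ENNReal.ofReal (ε/(2/5)) + ENNReal.ofReal (ε/2) := by
          congr 1
          rw [← ENNReal.ofReal_tsum_of_nonneg (fun i => by positivity)
            ((summable_geometric_of_lt_one (by norm_num) (by norm_num)).mul_left _)]
          congr 1
          rw [tsum_mul_left, tsum_geometric_of_lt_one (by norm_num) (by norm_num)]
          norm_num
          ring
      _ ≤ ENNReal.ofReal (3*ε) := by
          rw [← ENNReal.ofReal_add (by positivity) (by positivity)]
          apply ENNReal.ofReal_le_ofReal
          have h1 : ε/(2/5) = 5/2*ε := by ring
          linarith

end Komlos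

section Main

variable (ρ : ℕ → Ω → WithTop ℝ) (N : ℕ → ℕ) (μ : ℕ → ℕ → ℝ)

private def Fh (n : ℕ) (t : ℝ) (ω : Ω) : ℝ :=
  ∑ k ∈ Finset.Icc n (N n), μ n k * (if (t : WithTop ℝ) ≤ ρ k ω then (1:ℝ) else 0)

private def Eset (ω : Ω) : Set ℝ :=
  {t | t ∈ Set.Icc (0:ℝ) 1 ∧ ∃ n, Fh ρ N μ n t ω < 1/2}

private lemma mem_Eset {t : ℝ} {ω : Ω} :
    t ∈ Eset ρ N μ ω ↔ t ∈ Set.Icc (0:ℝ) 1 ∧ ∃ n, Fh ρ N μ n t ω < 1/2 := Iff.rfl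

private lemma Eset_bddBelow (ω : Ω) : BddBelow (Eset ρ N μ ω) :=
  ⟨0, fun _ hy => hy.1.1⟩

open Classical in
private def rhoLim (ω : Ω) : WithTop ℝ :=
  if (Eset ρ N μ ω).Nonempty then ((sInf (Eset ρ N μ ω) : ℝ) : WithTop ℝ) else ⊤

private lemma Fh_nonneg (hμpos : ∀ n, ∀ k ∈ Finset.Icc n (N n), 0 ≤ μ n k)
    (n : ℕ) (t : ℝ) (ω : Ω) : 0 ≤ Fh ρ N μ n t ω :=
  Finset.sum_nonneg fun k hk => mul_nonneg (hμpos n k hk) (by split <;> norm_num)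

private lemma Fh_zero (hρ_val : ∀ k, ValuedInUnitOrTop (ρ k))
    (hμsum : ∀ n, ∑ k ∈ Finset.Icc n (N n), μ n k = 1) (n : ℕ) (ω : Ω) :
    Fh ρ N μ n 0 ω = 1 := by
  have hterm : Fh ρ N μ n 0 ω = ∑ k ∈ Finset.Icc n (N n), μ n k := by
    apply Finset.sum_congr rfl
    intro k _
    rw [if_pos, mul_one]
    rcases hρ_val k ω with h | ⟨u, hu, h⟩
    · rw [h]; exact le_top
    · rw [h]; exact_mod_cast hu.1
  rw [hterm, hμsum n]

private lemma Fh_loc (n : ℕ) (ω : Ω) {s t' : ℝ} (hts : t' ≤ s)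
    (hcond : ∀ k ∈ Finset.Icc n (N n), ρ k ω < (s : WithTop ℝ) → ρ k ω < (t' : WithTop ℝ)) :
    Fh ρ N μ n t' ω = Fh ρ N μ n s ω := by
  apply Finset.sum_congr rfl
  intro k hk
  congr 1
  by_cases hks : (s : WithTop ℝ) ≤ ρ k ω
  · rw [if_pos hks, if_pos (le_trans (WithTop.coe_le_coe.mpr hts) hks)]
  · rw [if_neg hks, if_neg (not_le.mpr (hcond k hk (not_le.mp hks)))]

private lemma Fh_rat (n : ℕ) (ω : Ω) {s : ℝ} (hs : 0 < s) :
    ∃ q : ℚ, 0 < (q:ℝ) ∧ (q:ℝ) < s ∧ Fh ρ N μ n (q:ℝ) ω = Fh ρ N μ n s ω := by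
  classical
  set cand : Finset ℝ := insert (0:ℝ)
    (((Finset.Icc n (N n)).filter (fun k => ρ k ω < (s : WithTop ℝ))).image
      (fun k => WithTop.untopD 0 (ρ k ω))) with hcand
  have h0c : (0:ℝ) ∈ cand := by simp [hcand]
  have hne : cand.Nonempty := ⟨0, h0c⟩
  have hlt : ∀ x ∈ cand, x < s := by
    intro x hx
    simp only [hcand, Finset.mem_insert, Finset.mem_image, Finset.mem_filter] at hx
    rcases hx with rfl | ⟨k, ⟨_, hk2⟩, rfl⟩
    · exact hs
    · obtain ⟨v, hv⟩ := WithTop.ne_top_iff_exists.mp (ne_top_of_lt hk2)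
      rw [← hv] at hk2 ⊢
      rw [WithTop.untopD_coe]
      exact WithTop.coe_lt_coe.mp hk2
  have hb : cand.max' hne < s := (Finset.max'_lt_iff cand hne).mpr hlt
  obtain ⟨q, hq1, hq2⟩ := exists_rat_btwn hb
  have hq0 : 0 < (q:ℝ) := lt_of_le_of_lt (Finset.le_max' cand 0 h0c) hq1
  refine ⟨q, hq0, hq2, Fh_loc ρ N μ n ω hq2.le ?_⟩
  intro k hk hklt
  obtain ⟨v, hv⟩ := WithTop.ne_top_iff_exists.mp (ne_top_of_lt hklt)
  have hvc : v ∈ cand := by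
    simp only [hcand, Finset.mem_insert, Finset.mem_image, Finset.mem_filter]
    right
    exact ⟨k, ⟨hk, hklt⟩, by rw [← hv, WithTop.untopD_coe]⟩
  have hvq : v < (q:ℝ) := lt_of_le_of_lt (Finset.le_max' cand v hvc) hq1
  rw [← hv]
  exact_mod_cast hvq

private lemma rhoLim_valued : ValuedInUnitOrTop (rhoLim ρ N μ) := by
  intro ω
  unfold rhoLim
  split
  case isTrue h =>
    right
    refine ⟨sInf (Eset ρ N μ ω), ⟨?_, ?_⟩, rfl⟩
    · exact le_csInf h fun x hx => hx.1.1
    · obtain ⟨x, hx⟩ := h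
      exact le_trans (csInf_le (Eset_bddBelow ρ N μ ω) hx) hx.1.2
  case isFalse h => exact Or.inl rfl

private lemma rhoLim_key (hρ_val : ∀ k, ValuedInUnitOrTop (ρ k))
    (hμsum : ∀ n, ∑ k ∈ Finset.Icc n (N n), μ n k = 1)
    (n : ℕ) (t : ℝ) (ht : t ∈ Set.Icc (0:ℝ) 1) (ω : Ω)
    (hle : (t : WithTop ℝ) ≤ rhoLim ρ N μ ω) : 1/2 ≤ Fh ρ N μ n t ω := by
  by_contra hlt
  push_neg at hlt
  have htE : t ∈ Eset ρ N μ ω := ⟨ht, n, hlt⟩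
  have hne : (Eset ρ N μ ω).Nonempty := ⟨t, htE⟩
  simp only [rhoLim, if_pos hne] at hle
  have htc : t ≤ sInf (Eset ρ N μ ω) := WithTop.coe_le_coe.mp hle
  have hct : sInf (Eset ρ N μ ω) ≤ t := csInf_le (Eset_bddBelow ρ N μ ω) htE
  rcases eq_or_lt_of_le ht.1 with h0 | h0
  · rw [← h0] at hlt
    rw [Fh_zero ρ N μ hρ_val hμsum n ω] at hlt
    norm_num at hlt
  · obtain ⟨q, hq0, hqs, hqe⟩ := Fh_rat ρ N μ n ω h0
    have hqE : (q:ℝ) ∈ Eset ρ N μ ω :=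
      ⟨⟨hq0.le, le_trans hqs.le ht.2⟩, n, by rw [hqe]; exact hlt⟩
    have := csInf_le (Eset_bddBelow ρ N μ ω) hqE
    linarith

private lemma Fh_meas {ℱ : Filtration ℝ m0} (hρ_stop : ∀ k, IsStoppingTimeTop ℱ (ρ k))
    (n : ℕ) {r u : ℝ} (hru : r ≤ u) :
    MeasurableSet[ℱ u] {ω | Fh ρ N μ n r ω < 1/2} := by
  have hmeas : Measurable[ℱ u] (Fh ρ N μ n r) := by
    apply Finset.measurable_sum
    intro k _
    apply Measurable.const_mul
    have hset : MeasurableSet[ℱ u] {ω | (r : WithTop ℝ) ≤ ρ k ω} := by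
      have hEq : {ω | (r : WithTop ℝ) ≤ ρ k ω} =
          (⋃ p : {p : ℚ // (p:ℝ) < r}, {ω | ρ k ω ≤ (((p:ℚ):ℝ) : WithTop ℝ)})ᶜ := by
        ext ω
        simp only [mem_compl_iff, mem_iUnion, mem_setOf_eq, not_exists]
        constructor
        · intro h p hp
          have hle : (r : WithTop ℝ) ≤ (((p:ℚ):ℝ) : WithTop ℝ) := le_trans h hp
          exact absurd (WithTop.coe_le_coe.mp hle) (not_le.mpr p.2)
        · intro h
          by_contra hc
          push_neg at hc
          obtain ⟨v, hv⟩ := WithTop.ne_top_iff_exists.mp (ne_top_of_lt hc)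
          rw [← hv] at hc
          have hvr : v < r := WithTop.coe_lt_coe.mp hc
          obtain ⟨p, hp1, hp2⟩ := exists_rat_btwn hvr
          exact h ⟨p, hp2⟩ (by rw [← hv]; exact WithTop.coe_le_coe.mpr hp1.le)
      rw [hEq]
      apply MeasurableSet.compl
      apply MeasurableSet.iUnion
      intro p
      exact ℱ.mono (le_trans p.2.le hru) _ (hρ_stop k ((p:ℚ):ℝ))
    have hite : (fun ω => if (r : WithTop ℝ) ≤ ρ k ω then (1:ℝ) else 0) =
        ({ω | (r : WithTop ℝ) ≤ ρ k ω}).indicator (fun _ => (1:ℝ)) := by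
      funext ω
      rw [Set.indicator_apply]
      rfl
    rw [hite]
    exact measurable_const.indicator hset
  exact measurableSet_lt hmeas measurable_const

private lemma rhoLim_stop {ℱ : Filtration ℝ m0} (hRC : RightContinuousFiltration ℱ)
    (hρ_stop : ∀ k, IsStoppingTimeTop ℱ (ρ k)) (hρ_val : ∀ k, ValuedInUnitOrTop (ρ k))
    (hμsum : ∀ n, ∑ k ∈ Finset.Icc n (N n), μ n k = 1) :
    IsStoppingTimeTop ℱ (rhoLim ρ N μ) := by
  intro t
  by_cases ht : 0 ≤ t
  swap
  · convert @MeasurableSet.empty _ (ℱ t)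
    ext ω
    simp only [mem_setOf_eq, mem_empty_iff_false, iff_false]
    intro hc
    by_cases hne : (Eset ρ N μ ω).Nonempty
    · simp only [rhoLim, if_pos hne] at hc
      have h0 : (0:ℝ) ≤ sInf (Eset ρ N μ ω) := le_csInf hne fun y hy => hy.1.1
      have := WithTop.coe_le_coe.mp hc
      linarith
    · simp only [rhoLim, if_neg hne] at hc
      simp at hc
  · set U : ℚ → Set Ω := fun q => ⋃ (n : ℕ)
        (r : {r : ℚ // 0 < ((r:ℚ):ℝ) ∧ ((r:ℚ):ℝ) ≤ 1 ∧ ((r:ℚ):ℝ) < ((q:ℚ):ℝ)}),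
        {ω | Fh ρ N μ n ((r:ℚ):ℝ) ω < 1/2} with hU
    have hUmono : ∀ q q' : ℚ, (q:ℝ) ≤ ((q':ℚ):ℝ) → U q ⊆ U q' := by
      intro q q' hqq ω hω
      simp only [hU, mem_iUnion] at hω ⊢
      obtain ⟨n, r, hr⟩ := hω
      exact ⟨n, ⟨r.1, r.2.1, r.2.2.1, lt_of_lt_of_le r.2.2.2 hqq⟩, hr⟩
    have hset : {ω | rhoLim ρ N μ ω ≤ (t : WithTop ℝ)} =
        ⋂ (q : {q : ℚ // t < ((q:ℚ):ℝ)}), U q.1 := by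
      ext ω
      simp only [mem_setOf_eq, mem_iInter]
      constructor
      · intro hc q
        by_cases hne : (Eset ρ N μ ω).Nonempty
        swap
        · simp only [rhoLim, if_neg hne] at hc
          simp at hc
        · simp only [rhoLim, if_pos hne] at hc
          have hct : sInf (Eset ρ N μ ω) ≤ t := WithTop.coe_le_coe.mp hc
          have hlt : sInf (Eset ρ N μ ω) < ((q:ℚ):ℝ) := lt_of_le_of_lt hct q.2
          obtain ⟨s, hsE, hsq⟩ := exists_lt_of_csInf_lt hne hlt
          obtain ⟨hs01, n, hFs⟩ := hsE
          have hs0 : 0 < s := by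
            rcases eq_or_lt_of_le hs01.1 with h0 | h0
            · exfalso
              rw [← h0, Fh_zero ρ N μ hρ_val hμsum n ω] at hFs
              norm_num at hFs
            · exact h0
          obtain ⟨r, hr0, hrs, hre⟩ := Fh_rat ρ N μ n ω hs0
          simp only [hU, mem_iUnion]
          exact ⟨n, ⟨r, hr0, le_trans hrs.le hs01.2, lt_trans hrs hsq⟩,
            by show Fh ρ N μ n ((r:ℚ):ℝ) ω < 1/2; rw [hre]; exact hFs⟩
      · intro hc
        have hex : ∀ q : {q : ℚ // t < ((q:ℚ):ℝ)}, ∃ x ∈ Eset ρ N μ ω, x < ((q:ℚ):ℝ) := by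
          intro q
          have := hc q
          simp only [hU, mem_iUnion] at this
          obtain ⟨n, r, hr⟩ := this
          exact ⟨((r:ℚ):ℝ), ⟨⟨r.2.1.le, r.2.2.1⟩, n, hr⟩, r.2.2.2⟩
        have hne : (Eset ρ N μ ω).Nonempty := by
          obtain ⟨q0, hq0⟩ := exists_rat_gt t
          obtain ⟨x, hx, _⟩ := hex ⟨q0, hq0⟩
          exact ⟨x, hx⟩
        simp only [rhoLim, if_pos hne]
        rw [WithTop.coe_le_coe]
        by_contra hgt
        push_neg at hgt
        obtain ⟨q, hq1, hq2⟩ := exists_rat_btwn hgt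
        obtain ⟨x, hxE, hxq⟩ := hex ⟨q, hq1⟩
        have hle := csInf_le (Eset_bddBelow ρ N μ ω) hxE
        linarith
    rw [hset, hRC t]
    refine MeasurableSpace.measurableSet_iInf.mpr fun s => ?_
    refine MeasurableSpace.measurableSet_iInf.mpr fun hs => ?_
    obtain ⟨q0, hq01, hq02⟩ := exists_rat_btwn (Set.mem_Ioi.mp hs)
    have hres : (⋂ (q : {q : ℚ // t < ((q:ℚ):ℝ)}), U q.1) =
        ⋂ (q : {q : ℚ // t < ((q:ℚ):ℝ) ∧ ((q:ℚ):ℝ) ≤ s}), U q.1 := by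
      apply Subset.antisymm
      · exact fun ω hω => mem_iInter.mpr fun q => mem_iInter.mp hω ⟨q.1, q.2.1⟩
      · intro ω hω
        refine mem_iInter.mpr fun q => ?_
        by_cases hqs : ((q:ℚ):ℝ) ≤ s
        · exact mem_iInter.mp hω ⟨q.1, q.2, hqs⟩
        · have h0 := mem_iInter.mp hω ⟨q0, hq01, hq02.le⟩
          exact hUmono q0 q.1 (le_trans hq02.le (not_le.mp hqs).le) h0
    rw [hres]
    refine MeasurableSet.iInter fun q => ?_
    refine MeasurableSet.iUnion fun n => ?_
    refine MeasurableSet.iUnion fun r => ?_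
    exact Fh_meas ρ N μ hρ_stop n (le_trans r.2.2.2.le q.2.2)

end Main

/-- Given stopping times `(ρ_n)` with `P(ρ_n = ∞) ≥ 1 - ε`, there are a stopping
time `ρ` with `P(ρ = ∞) ≥ 1 - 3ε` and forward convex weights such that
`1_{[0,ρ]} ≤ 2 ∑_{k=n}^{N_n} μ_k^n 1_{[0,ρ_k]}` pointwise, for every `n`. -/
theorem exists_limit_stopping_time
    (ℱ : Filtration ℝ m0) (P : Measure Ω) [IsProbabilityMeasure P]
    (hUC : UsualConditions ℱ P)
    (ε : ℝ) (hε : 0 < ε) (ρ : ℕ → Ω → WithTop ℝ)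
    (hρ_stop : ∀ n, IsStoppingTimeTop ℱ (ρ n))
    (hρ_val : ∀ n, ValuedInUnitOrTop (ρ n))
    (hρ_P : ∀ n, 1 - ENNReal.ofReal ε ≤ P {ω | ρ n ω = ⊤}) :
    ∃ (ρ' : Ω → WithTop ℝ) (N : ℕ → ℕ) (μ : ℕ → ℕ → ℝ),
      IsStoppingTimeTop ℱ ρ' ∧ ValuedInUnitOrTop ρ' ∧
      1 - ENNReal.ofReal (3 * ε) ≤ P {ω | ρ' ω = ⊤} ∧
      ∀ n : ℕ, n ≤ N n ∧ (∀ k ∈ Finset.Icc n (N n), 0 ≤ μ n k) ∧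
        (∑ k ∈ Finset.Icc n (N n), μ n k = 1) ∧
        ∀ t ∈ Set.Icc (0:ℝ) 1, ∀ ω,
          (if (t : WithTop ℝ) ≤ ρ' ω then (1:ℝ) else 0) ≤
            2 * ∑ k ∈ Finset.Icc n (N n),
              μ n k * (if (t : WithTop ℝ) ≤ ρ k ω then (1:ℝ) else 0) := by
  classical
  by_cases hε3 : (1:ℝ)/3 ≤ ε
  · -- trivial case: `1 - 3ε ≤ 0`
    refine ⟨fun _ => ((0:ℝ) : WithTop ℝ), fun n => n, fun n k => if k = n then 1 else 0,
      ?_, ?_, ?_, ?_⟩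
    · intro t
      by_cases h0t : (0:ℝ) ≤ t
      · have hs : {ω : Ω | ((0:ℝ) : WithTop ℝ) ≤ (t : WithTop ℝ)} = Set.univ := by
          ext ω
          simp only [mem_setOf_eq, mem_univ, iff_true]
          exact WithTop.coe_le_coe.mpr h0t
        show MeasurableSet[ℱ t] {ω : Ω | ((0:ℝ) : WithTop ℝ) ≤ (t : WithTop ℝ)}
        rw [hs]
        exact @MeasurableSet.univ _ (ℱ t)
      · have hs : {ω : Ω | ((0:ℝ) : WithTop ℝ) ≤ (t : WithTop ℝ)} = ∅ := by
          ext ω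
          simp only [mem_setOf_eq, mem_empty_iff_false, iff_false]
          intro hc
          exact h0t (WithTop.coe_le_coe.mp hc)
        show MeasurableSet[ℱ t] {ω : Ω | ((0:ℝ) : WithTop ℝ) ≤ (t : WithTop ℝ)}
        rw [hs]
        exact @MeasurableSet.empty _ (ℱ t)
    · intro ω
      exact Or.inr ⟨0, ⟨le_rfl, zero_le_one⟩, rfl⟩
    · have hz : (1:ENNReal) - ENNReal.ofReal (3*ε) = 0 :=
        tsub_eq_zero_of_le (ENNReal.one_le_ofReal.mpr (by linarith))
      rw [hz]
      exact zero_le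
    · intro n
      refine ⟨le_rfl, fun k _ => by
        show (0:ℝ) ≤ if k = n then 1 else 0
        split <;> norm_num, by simp, ?_⟩
      intro t ht ω
      rw [Finset.Icc_self, Finset.sum_singleton]
      show (if (t : WithTop ℝ) ≤ ((0:ℝ) : WithTop ℝ) then (1:ℝ) else 0) ≤
        2 * ((if n = n then (1:ℝ) else 0) * (if (t : WithTop ℝ) ≤ ρ n ω then (1:ℝ) else 0))
      rw [if_pos rfl, one_mul]
      by_cases h1 : (t : WithTop ℝ) ≤ ((0:ℝ) : WithTop ℝ)
      · rw [if_pos h1]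
        have ht0 : t = 0 := le_antisymm (WithTop.coe_le_coe.mp h1) ht.1
        have h2 : (t : WithTop ℝ) ≤ ρ n ω := by
          rw [ht0]
          rcases hρ_val n ω with h | ⟨u, hu, h⟩
          · rw [h]; exact le_top
          · rw [h]; exact_mod_cast hu.1
        rw [if_pos h2]
        norm_num
      · rw [if_neg h1]
        split <;> norm_num
  · push_neg at hε3
    set A : ℕ → Set Ω := fun k => {ω | ρ k ω = ⊤} with hA_def
    have hA : ∀ k, MeasurableSet (A k) := by
      intro k
      have h1 : MeasurableSet[ℱ 1] {ω | ρ k ω ≤ ((1:ℝ) : WithTop ℝ)} := hρ_stop k 1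
      have heq : A k = {ω | ρ k ω ≤ ((1:ℝ) : WithTop ℝ)}ᶜ := by
        ext ω
        simp only [hA_def, mem_setOf_eq, mem_compl_iff]
        constructor
        · intro h hc
          rw [h] at hc
          exact WithTop.coe_ne_top (top_le_iff.mp hc)
        · intro h
          rcases hρ_val k ω with h' | ⟨u, hu, h'⟩
          · exact h'
          · exact absurd (h' ▸ WithTop.coe_le_coe.mpr hu.2) h
      rw [heq]
      exact (ℱ.le 1 _ h1).compl
    have hAP : ∀ k, 1 - ε ≤ (P (A k)).toReal := by
      intro k
      have h := hρ_P k
      have hε1 : ENNReal.ofReal ε ≤ 1 := ENNReal.ofReal_le_one.mpr (by linarith)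
      have hm := ENNReal.toReal_mono (measure_ne_top P _) h
      rwa [ENNReal.toReal_sub_of_le hε1 ENNReal.one_ne_top, ENNReal.toReal_one,
        ENNReal.toReal_ofReal hε.le] at hm
    obtain ⟨N, μ, hN, hμpos, hμsum, hPb⟩ := komlos A P hA ε hε hAP
    refine ⟨rhoLim ρ N μ, N, μ, rhoLim_stop ρ N μ hUC.1 hρ_stop hρ_val hμsum,
      rhoLim_valued ρ N μ, ?_, ?_⟩
    · have hsub : {ω | ∃ n, ∑ k ∈ Finset.Icc n (N n), μ n k * kf A k ω < 1/2}ᶜ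
          ⊆ {ω | rhoLim ρ N μ ω = ⊤} := by
        intro ω hω
        simp only [mem_compl_iff, mem_setOf_eq, not_exists, not_lt] at hω
        have hE : ¬ (Eset ρ N μ ω).Nonempty := by
          rintro ⟨s, hsmem⟩
          obtain ⟨hs01, n, hFs⟩ := (mem_Eset ρ N μ).mp hsmem
          have hle : ∑ k ∈ Finset.Icc n (N n), μ n k * kf A k ω ≤ Fh ρ N μ n s ω := by
            apply Finset.sum_le_sum
            intro k hk
            apply mul_le_mul_of_nonneg_left _ (hμpos n k hk)
            by_cases hk2 : ω ∈ A k
            · have htop : ρ k ω = ⊤ := hk2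
              rw [if_pos (by rw [htop]; exact le_top)]
              have : kf A k ω = 1 := by
                simp only [kf]
                rw [Set.indicator_of_mem hk2]
              rw [this]
            · have : kf A k ω = 0 := by
                simp only [kf]
                rw [Set.indicator_of_notMem hk2]
              rw [this]
              split <;> norm_num
          exact absurd hFs (not_lt.mpr (le_trans (hω n) hle))
        show rhoLim ρ N μ ω = ⊤
        simp only [rhoLim, if_neg hE]
      have h1 : (1:ENNReal) ≤ P {ω | rhoLim ρ N μ ω = ⊤} + ENNReal.ofReal (3*ε) := by
        calc (1:ENNReal) = P Set.univ := measure_univ.symm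
          _ ≤ P ({ω | rhoLim ρ N μ ω = ⊤} ∪
                {ω | ∃ n, ∑ k ∈ Finset.Icc n (N n), μ n k * kf A k ω < 1/2}) := by
              apply measure_mono
              intro ω _
              by_cases hω : ω ∈ {ω | ∃ n, ∑ k ∈ Finset.Icc n (N n), μ n k * kf A k ω < 1/2}
              · exact Or.inr hω
              · exact Or.inl (hsub hω)
          _ ≤ P {ω | rhoLim ρ N μ ω = ⊤} +
                P {ω | ∃ n, ∑ k ∈ Finset.Icc n (N n), μ n k * kf A k ω < 1/2} :=
              measure_union_le _ _
          _ ≤ _ := add_le_add le_rfl hPb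
      exact tsub_le_iff_right.mpr h1
    · intro n
      refine ⟨hN n, hμpos n, hμsum n, ?_⟩
      intro t ht ω
      by_cases hle : (t : WithTop ℝ) ≤ rhoLim ρ N μ ω
      · rw [if_pos hle]
        have hF := rhoLim_key ρ N μ hρ_val hμsum n t ht ω hle
        have h2 : 1 ≤ 2 * Fh ρ N μ n t ω := by linarith
        exact h2
      · rw [if_neg hle]
        have h0 := Fh_nonneg ρ N μ hμpos n t ω
        have h2 : (0:ℝ) ≤ 2 * Fh ρ N μ n t ω := by linarith
        exact h2

end BD
end
end

section
/- Let S be a Riemann integrator. Then for every ε > 0 there exists C > 0 such that P(|I_S(K^{D_n})| ≥ C) ≤ ε for all n ≥ 1 and all bounded continuous adapted processes K with ‖K‖_∞ ≤ 1, where K^{D_n} := Σ_{i=0}^{2^n−1} K_{i/2^n} · 1_{(i/2^n, (i+1)/2^n]} and I_S(K^{D_n}) = Σ_{i=0}^{2^n−1} K_{i/2^n} (S_{(i+1)/2^n} − S_{i/2^n}). -/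
open MeasureTheory Set Filter Topology

noncomputable section

namespace BD

variable {Ω : Type*} {m0 : MeasurableSpace Ω}

/-! ### Auxiliary material for Statement 10 -/

open scoped ENNReal

/-- Generic dependent-recursive construction of a sequence. -/
private noncomputable def buildSeq {D : Type*} [Inhabited D]
    (Spec : (ℕ → D) → ℕ → D → Prop)
    (hstep : ∀ h j, ∃ d, Spec h j d) (j : ℕ) : D :=
  (hstep (fun i => if h : i < j then buildSeq Spec hstep i else default) j).choose
termination_by j
decreasing_by all_goals omega

private lemma buildSeq_spec {D : Type*} [Inhabited D]
    (Spec : (ℕ → D) → ℕ → D → Prop)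
    (hstep : ∀ h j, ∃ d, Spec h j d)
    (hloc : ∀ h₁ h₂ j d, (∀ i, i < j → h₁ i = h₂ i) → Spec h₁ j d → Spec h₂ j d)
    (j : ℕ) : Spec (buildSeq Spec hstep) j (buildSeq Spec hstep j) := by
  have heq : buildSeq Spec hstep j
      = (hstep (fun i => if h : i < j then buildSeq Spec hstep i else default) j).choose := by
    rw [buildSeq]
  rw [heq]
  exact hloc _ _ j _ (fun i hi => by simp [hi])
    (hstep (fun i => if h : i < j then buildSeq Spec hstep i else default) j).choose_spec

variable {P : Measure Ω} [IsProbabilityMeasure P]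

/-- Sum of absolute dyadic increments of `S`. -/
def Vsum (S : ℝ → Ω → ℝ) (n : ℕ) (ω : Ω) : ℝ :=
  ∑ i ∈ Finset.range (2 ^ n), |S (((i : ℝ) + 1) / 2 ^ n) ω - S ((i : ℝ) / 2 ^ n) ω|

lemma dyadic_mem {i n : ℕ} (h : i ≤ 2 ^ n) : ((i : ℝ) / 2 ^ n) ∈ Set.Icc (0 : ℝ) 1 := by
  constructor
  · positivity
  · rw [div_le_one (by positivity)]
    exact_mod_cast h

lemma dyadic_mem' {i n : ℕ} (h : i < 2 ^ n) : (((i : ℝ) + 1) / 2 ^ n) ∈ Set.Icc (0 : ℝ) 1 := by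
  have h1 : ((i : ℝ) + 1) = ((i + 1 : ℕ) : ℝ) := by push_cast; ring
  rw [h1]; exact dyadic_mem h

lemma Vsum_nonneg (S : ℝ → Ω → ℝ) (n : ℕ) (ω : Ω) : 0 ≤ Vsum S n ω :=
  Finset.sum_nonneg fun _ _ => abs_nonneg _

lemma measurable_Vsum {S : ℝ → Ω → ℝ} (hSm : ∀ t ∈ Set.Icc (0:ℝ) 1, Measurable (S t)) (n : ℕ) :
    Measurable (Vsum S n) := by
  refine Finset.measurable_sum _ fun i hi => ?_
  have hi' := Finset.mem_range.mp hi
  exact ((hSm _ (dyadic_mem' hi')).sub (hSm _ (dyadic_mem hi'.le))).abs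

lemma abs_riemannSum_le {S K : ℝ → Ω → ℝ} {c : ℝ} {n : ℕ} {ω : Ω}
    (hc : ∀ t ∈ Set.Icc (0:ℝ) 1, |K t ω| ≤ c) :
    |riemannSum S K n ω| ≤ c * Vsum S n ω := by
  unfold riemannSum Vsum
  rw [Finset.mul_sum]
  refine (Finset.abs_sum_le_sum_abs _ _).trans (Finset.sum_le_sum fun i hi => ?_)
  rw [abs_mul]
  exact mul_le_mul_of_nonneg_right (hc _ (dyadic_mem (Finset.mem_range.mp hi).le)) (abs_nonneg _)

lemma measurable_riemannSum {S K : ℝ → Ω → ℝ}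
    (hSm : ∀ t ∈ Set.Icc (0:ℝ) 1, Measurable (S t))
    (hK : ∀ t ∈ Set.Icc (0:ℝ) 1, Measurable (K t)) (n : ℕ) :
    Measurable (riemannSum S K n) := by
  refine Finset.measurable_sum _ fun i hi => ?_
  have hi' := Finset.mem_range.mp hi
  exact (hK _ (dyadic_mem hi'.le)).mul
    ((hSm _ (dyadic_mem' hi')).sub (hSm _ (dyadic_mem hi'.le)))

lemma tail_tendsto {f : Ω → ℝ} (hf : Measurable f) :
    Tendsto (fun k : ℕ => P {ω | (k : ℝ) ≤ |f ω|}) atTop (nhds 0) := by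
  have h3 : ⋂ k : ℕ, {ω | (k : ℝ) ≤ |f ω|} = ∅ := by
    ext ω
    simp only [Set.mem_iInter, Set.mem_setOf_eq, Set.mem_empty_iff_false, iff_false, not_forall,
      not_le]
    obtain ⟨k, hk⟩ := exists_nat_gt |f ω|
    exact ⟨k, hk⟩
  have := tendsto_measure_iInter_atTop (μ := P)
    (s := fun k : ℕ => {ω | (k : ℝ) ≤ |f ω|})
    (fun k => (measurableSet_le measurable_const hf.abs).nullMeasurableSet)
    (by
      intro a b hab ω hω
      simp only [Set.mem_setOf_eq] at hω ⊢
      exact le_trans (by exact_mod_cast hab) hω)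
    ⟨0, measure_ne_top _ _⟩
  rw [h3, measure_empty] at this
  exact this

lemma tail_small {f : Ω → ℝ} (hf : Measurable f) (η : ℝ≥0∞) (hη : 0 < η) :
    ∃ C : ℝ, 0 < C ∧ P {ω | C ≤ |f ω|} ≤ η := by
  have := (tail_tendsto (P := P) hf).eventually_lt_const hη
  rw [eventually_atTop] at this
  obtain ⟨k, hk⟩ := this
  refine ⟨max k 1, lt_of_lt_of_le one_pos (le_max_right _ _), ?_⟩
  refine le_trans (measure_mono ?_) (hk k le_rfl).le
  intro ω hω
  simp only [Set.mem_setOf_eq] at hω ⊢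
  exact le_trans (le_max_left _ _) hω

lemma tail_small_finite {g : ℕ → Ω → ℝ} (hg : ∀ n, Measurable (g n)) (N : ℕ)
    (η : ℝ≥0∞) (hη : 0 < η) :
    ∃ C : ℝ, 0 < C ∧ ∀ n < N, P {ω | C ≤ |g n ω|} ≤ η := by
  choose C hC0 hC using fun n => tail_small (P := P) (hg n) η hη
  refine ⟨((Finset.range N).sup fun n => ⌈C n⌉₊ : ℕ) + 1, by positivity, fun n hn => ?_⟩
  refine le_trans (measure_mono ?_) (hC n)
  intro ω hω
  simp only [Set.mem_setOf_eq] at hω ⊢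
  refine le_trans ?_ hω
  have h1 : C n ≤ (⌈C n⌉₊ : ℝ) := Nat.le_ceil _
  have h2 : ((⌈C n⌉₊ : ℕ) : ℝ) ≤ (((Finset.range N).sup fun n => ⌈C n⌉₊ : ℕ) : ℝ) := by
    exact_mod_cast Finset.le_sup (f := fun n => ⌈C n⌉₊) (Finset.mem_range.mpr hn)
  linarith

lemma bddInProb {X : ℕ → Ω → ℝ} (hXm : ∀ n, Measurable (X n)) {L : Ω → ℝ}
    (hT : TendstoInMeasure P X atTop L) (η : ℝ≥0∞) (hη : 0 < η) :
    ∃ B : ℝ, 0 < B ∧ ∀ n, P {ω | B ≤ |X n ω|} ≤ η := by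
  have hη2 : (0:ℝ≥0∞) < η / 2 := ENNReal.half_pos hη.ne'
  have hLae : AEMeasurable L P := hT.aemeasurable fun n => (hXm n).aemeasurable
  have hnull : P {ω | ¬ (L ω = hLae.mk L ω)} = 0 := ae_iff.mp hLae.ae_eq_mk
  obtain ⟨CL, hCL0, hCL⟩ := tail_small (P := P) hLae.measurable_mk (η / 2) hη2
  have h1 := (hT 1 one_pos).eventually_lt_const hη2
  rw [eventually_atTop] at h1
  obtain ⟨N, hN⟩ := h1
  obtain ⟨C0, hC00, hC0⟩ := tail_small_finite (P := P) hXm N η hη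
  refine ⟨max C0 (CL + 2), lt_of_lt_of_le hC00 (le_max_left _ _), fun n => ?_⟩
  rcases lt_or_ge n N with h | h
  · refine le_trans (measure_mono ?_) (hC0 n h)
    intro ω hω
    simp only [Set.mem_setOf_eq] at hω ⊢
    exact le_trans (le_max_left _ _) hω
  · have hincl : {ω | max C0 (CL + 2) ≤ |X n ω|} ⊆
        {ω | (1:ℝ) ≤ dist (X n ω) (L ω)} ∪
          ({ω | CL ≤ |hLae.mk L ω|} ∪ {ω | ¬ (L ω = hLae.mk L ω)}) := by
      intro ω hω
      simp only [Set.mem_setOf_eq, Set.mem_union]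
      by_cases hd : (1:ℝ) ≤ dist (X n ω) (L ω)
      · exact Or.inl hd
      · refine Or.inr ?_
        by_cases hLL : L ω = hLae.mk L ω
        · left
          push_neg at hd
          rw [Real.dist_eq] at hd
          have h2 : CL + 2 ≤ |X n ω| := le_trans (le_max_right _ _) hω
          have h3 : |X n ω| - |L ω| ≤ |X n ω - L ω| := abs_sub_abs_le_abs_sub _ _
          rw [← hLL]
          linarith
        · exact Or.inr hLL
    calc P {ω | max C0 (CL + 2) ≤ |X n ω|}
        ≤ P {ω | (1:ℝ) ≤ dist (X n ω) (L ω)} +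
          (P {ω | CL ≤ |hLae.mk L ω|} + P {ω | ¬ (L ω = hLae.mk L ω)}) :=
          le_trans (measure_mono hincl) (le_trans (measure_union_le _ _)
            (add_le_add le_rfl (measure_union_le _ _)))
      _ ≤ η / 2 + (η / 2 + 0) := add_le_add (by have := (hN n h).le; simp only [edist_dist, ENNReal.one_le_ofReal] at this; exact this) (add_le_add hCL hnull.le)
      _ = η := by rw [add_zero, ENNReal.add_halves]

lemma riemannSum_add (S F G : ℝ → Ω → ℝ) (n : ℕ) (ω : Ω) :
    riemannSum S (fun t ω => F t ω + G t ω) n ω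
      = riemannSum S F n ω + riemannSum S G n ω := by
  unfold riemannSum
  rw [← Finset.sum_add_distrib]
  exact Finset.sum_congr rfl fun i _ => by ring

lemma riemannSum_sum {ι : Type*} (S : ℝ → Ω → ℝ) (c : ι → ℝ) (F : ι → ℝ → Ω → ℝ)
    (s : Finset ι) (n : ℕ) (ω : Ω) :
    riemannSum S (fun t ω => ∑ i ∈ s, c i * F i t ω) n ω
      = ∑ i ∈ s, c i * riemannSum S (F i) n ω := by
  unfold riemannSum
  simp only [Finset.sum_mul]
  rw [Finset.sum_comm]
  refine Finset.sum_congr rfl fun i _ => ?_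
  rw [Finset.mul_sum]
  exact Finset.sum_congr rfl fun p _ => by ring

lemma riemannSum_congr {S F G : ℝ → Ω → ℝ} {n : ℕ} {ω : Ω}
    (h : ∀ t ∈ Set.Icc (0:ℝ) 1, F t ω = G t ω) :
    riemannSum S F n ω = riemannSum S G n ω := by
  unfold riemannSum
  exact Finset.sum_congr rfl fun i hi => by
    rw [h _ (dyadic_mem (Finset.mem_range.mp hi).le)]

/-- Clamp a real number to `[0,1]`. -/
def clampf (t : ℝ) : ℝ := max 0 (min 1 t)

lemma clampf_mem (t : ℝ) : clampf t ∈ Set.Icc (0:ℝ) 1 :=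
  ⟨le_max_left _ _, max_le zero_le_one (min_le_left _ _)⟩

lemma clampf_eq {t : ℝ} (ht : t ∈ Set.Icc (0:ℝ) 1) : clampf t = t := by
  unfold clampf
  rw [min_eq_right ht.2, max_eq_right ht.1]

lemma continuous_clampf : Continuous clampf :=
  continuous_const.max (continuous_const.min continuous_id)

/-- If `S` is a Riemann integrator then the Riemann-sum operators are uniformly
bounded in probability over the unit ball of bounded continuous adapted processes. -/
theorem riemannIntegrator_uniform_bound
    (ℱ : Filtration ℝ m0) (P : Measure Ω) [IsProbabilityMeasure P]
    (hUC : UsualConditions ℱ P) (S : ℝ → Ω → ℝ)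
    (hS_cadlag : Cadlag S) (hS_adapted : AdaptedOn ℱ S)
    (hS_riemann : RiemannIntegrator ℱ P S) :
    ∀ ε : ℝ, 0 < ε → ∃ C : ℝ, 0 < C ∧
      ∀ n : ℕ, 1 ≤ n → ∀ K : ℝ → Ω → ℝ, BddContAdapted ℱ K →
        (∀ t ∈ Set.Icc (0:ℝ) 1, ∀ ω, |K t ω| ≤ 1) →
        P {ω | C ≤ |riemannSum S K n ω|} ≤ ENNReal.ofReal ε := by
  intro ε hε
  by_contra hcon
  push_neg at hcon
  -- hcon : ∀ C, 0 < C → ∃ n, 1 ≤ n ∧ ∃ K, BddContAdapted ℱ K ∧ (bound 1) ∧ ofReal ε < P {...}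
  have hSm : ∀ t ∈ Set.Icc (0:ℝ) 1, Measurable (S t) := fun t ht =>
    ((hS_adapted t ht).mono (ℱ.le t)).measurable
  have hKmeas : ∀ K : ℝ → Ω → ℝ, BddContAdapted ℱ K → ∀ t ∈ Set.Icc (0:ℝ) 1,
      Measurable (K t) := fun K hK t ht => ((hK.2.1 t ht).mono (ℱ.le t)).measurable
  -- Step A : uniform bound over a fixed finite set of scales
  have hforce : ∀ j : ℕ, ∃ C0 : ℝ, 0 < C0 ∧ ∀ n < j, ∀ K : ℝ → Ω → ℝ,
      (∀ t ∈ Set.Icc (0:ℝ) 1, ∀ ω, |K t ω| ≤ 1) →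
      P {ω | C0 ≤ |riemannSum S K n ω|} ≤ ENNReal.ofReal ε := by
    intro j
    obtain ⟨C, hC0, hC⟩ := tail_small_finite (P := P) (fun n => measurable_Vsum hSm n) j
      (ENNReal.ofReal ε) (ENNReal.ofReal_pos.mpr hε)
    refine ⟨C, hC0, fun n hn K hK1 => ?_⟩
    refine le_trans (measure_mono ?_) (hC n hn)
    intro ω hω
    simp only [Set.mem_setOf_eq] at hω ⊢
    have h1 := abs_riemannSum_le (S := S) (K := K) (n := n) (ω := ω)
      (fun t ht => hK1 t ht ω)
    rw [one_mul] at h1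
    rw [abs_of_nonneg (Vsum_nonneg S n ω)]
    linarith
  choose C0 hC00 hC0force using hforce
  have hηpos : ∀ j : ℕ, (0:ℝ≥0∞) < ENNReal.ofReal (ε/8 * (1/2:ℝ)^j) := fun j =>
    ENNReal.ofReal_pos.mpr (by positivity)
  -- the recursion predicate
  let Spec : (ℕ → ℝ × ℕ × (ℝ → Ω → ℝ) × ℝ) → ℕ → ℝ × ℕ × (ℝ → Ω → ℝ) × ℝ → Prop :=
    fun h j d =>
      (0 < d.1 ∧ d.1 ≤ (1/2:ℝ)^j) ∧
      (∀ i < j, P {ω | (1/2:ℝ)^j ≤ d.1 * Vsum S (h i).2.1 ω}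
        ≤ ENNReal.ofReal (ε/8 * (1/2:ℝ)^j)) ∧
      (1 ≤ d.2.1 ∧ j ≤ d.2.1) ∧
      BddContAdapted ℱ d.2.2.1 ∧
      (∀ t ∈ Set.Icc (0:ℝ) 1, ∀ ω, |d.2.2.1 t ω| ≤ 1) ∧
      (ENNReal.ofReal ε <
        P {ω | ((j:ℝ) + 2 + ∑ i ∈ Finset.range j, (h i).1 * (h i).2.2.2)
            ≤ d.1 * |riemannSum S d.2.2.1 d.2.1 ω|}) ∧
      (0 < d.2.2.2 ∧ ∀ m : ℕ, P {ω | d.2.2.2 ≤ |riemannSum S d.2.2.1 m ω|}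
        ≤ ENNReal.ofReal (ε/8 * (1/2:ℝ)^j))
  have hstep : ∀ h j, ∃ d, Spec h j d := by
    intro h j
    obtain ⟨Cm, hCm0, hCm⟩ := tail_small_finite (P := P)
      (g := fun i => Vsum S (h i).2.1) (fun i => measurable_Vsum hSm _) j
      (ENNReal.ofReal (ε/8 * (1/2:ℝ)^j)) (hηpos j)
    set a : ℝ := (1/2:ℝ)^j / (Cm + 1) with ha_def
    have ha0 : 0 < a := by positivity
    have ha2 : a ≤ (1/2:ℝ)^j := div_le_self (by positivity) (by linarith)
    have haV : ∀ i < j, P {ω | (1/2:ℝ)^j ≤ a * Vsum S (h i).2.1 ω}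
        ≤ ENNReal.ofReal (ε/8 * (1/2:ℝ)^j) := by
      intro i hi
      refine le_trans (measure_mono ?_) (hCm i hi)
      intro ω hω
      simp only [Set.mem_setOf_eq] at hω ⊢
      have hpj : (0:ℝ) < (1/2:ℝ)^j := by positivity
      rw [ha_def, div_mul_eq_mul_div, le_div_iff₀ (by linarith)] at hω
      have h1 : Cm + 1 ≤ Vsum S (h i).2.1 ω := le_of_mul_le_mul_left hω hpj
      rw [abs_of_nonneg (Vsum_nonneg S _ ω)]
      linarith
    set Dj : ℝ := ∑ i ∈ Finset.range j, (h i).1 * (h i).2.2.2 with hDj_def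
    set Cc : ℝ := max (C0 j) (((j:ℝ) + 2 + Dj)/a + 1) with hCc_def
    have hCc0 : 0 < Cc := lt_of_lt_of_le (hC00 j) (le_max_left _ _)
    obtain ⟨n, hn1, K, hKbca, hK1, hKP⟩ := hcon Cc hCc0
    have hnj : j ≤ n := by
      by_contra hlt
      push_neg at hlt
      have h2 : P {ω | Cc ≤ |riemannSum S K n ω|}
          ≤ P {ω | C0 j ≤ |riemannSum S K n ω|} := by
        refine measure_mono ?_
        intro ω hω
        simp only [Set.mem_setOf_eq] at hω ⊢
        exact le_trans (le_max_left _ _) hω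
      exact absurd (lt_of_lt_of_le hKP (le_trans h2 (hC0force j n hlt K hK1)))
        (lt_irrefl _)
    have hE : ENNReal.ofReal ε <
        P {ω | ((j:ℝ) + 2 + Dj) ≤ a * |riemannSum S K n ω|} := by
      refine lt_of_lt_of_le hKP (measure_mono ?_)
      intro ω hω
      simp only [Set.mem_setOf_eq] at hω ⊢
      have h1 : ((j:ℝ)+2+Dj)/a + 1 ≤ Cc := le_max_right _ _
      have h2 : a * (((j:ℝ)+2+Dj)/a + 1) ≤ a * |riemannSum S K n ω| :=
        mul_le_mul_of_nonneg_left (le_trans h1 hω) ha0.le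
      rw [mul_add, mul_div_cancel₀ _ ha0.ne'] at h2
      linarith
    obtain ⟨LK, hLK⟩ := hS_riemann K hKbca
    obtain ⟨B, hB0, hB⟩ := bddInProb (P := P)
      (fun m => measurable_riemannSum hSm (hKmeas K hKbca) m) hLK _ (hηpos j)
    exact ⟨⟨a, n, K, B⟩, ⟨ha0, ha2⟩, haV, ⟨hn1, hnj⟩, hKbca, hK1, hE, hB0, hB⟩
  have hloc : ∀ h₁ h₂ j d, (∀ i, i < j → h₁ i = h₂ i) → Spec h₁ j d → Spec h₂ j d := by
    intro h₁ h₂ j d hh hs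
    obtain ⟨s1, s2, s3, s4, s5, s6, s7⟩ := hs
    refine ⟨s1, fun i hi => by rw [← hh i hi]; exact s2 i hi, s3, s4, s5, ?_, s7⟩
    have heq : (∑ i ∈ Finset.range j, (h₂ i).1 * (h₂ i).2.2.2)
        = ∑ i ∈ Finset.range j, (h₁ i).1 * (h₁ i).2.2.2 :=
      Finset.sum_congr rfl fun i hi => by rw [hh i (Finset.mem_range.mp hi)]
    rw [heq]
    exact s6
  set f := buildSeq Spec hstep with hf_def
  have spec : ∀ j, Spec f j (f j) := buildSeq_spec Spec hstep hloc
  have ha0 : ∀ j, 0 < (f j).1 := fun j => (spec j).1.1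
  have ha2 : ∀ j, (f j).1 ≤ (1/2:ℝ)^j := fun j => (spec j).1.2
  have hA : ∀ j, ∀ i < j, P {ω | (1/2:ℝ)^j ≤ (f j).1 * Vsum S (f i).2.1 ω}
      ≤ ENNReal.ofReal (ε/8 * (1/2:ℝ)^j) := fun j => (spec j).2.1
  have hnj : ∀ j, j ≤ (f j).2.1 := fun j => (spec j).2.2.1.2
  have hKbca : ∀ j, BddContAdapted ℱ (f j).2.2.1 := fun j => (spec j).2.2.2.1
  have hK1 : ∀ j, ∀ t ∈ Set.Icc (0:ℝ) 1, ∀ ω, |(f j).2.2.1 t ω| ≤ 1 := fun j =>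
    (spec j).2.2.2.2.1
  have hE : ∀ j : ℕ, ENNReal.ofReal ε <
      P {ω | ((j:ℝ) + 2 + ∑ i ∈ Finset.range j, (f i).1 * (f i).2.2.2)
          ≤ (f j).1 * |riemannSum S (f j).2.2.1 ((f j).2.1) ω|} := fun j =>
    (spec j).2.2.2.2.2.1
  have hB : ∀ j, ∀ m : ℕ, P {ω | (f j).2.2.2 ≤ |riemannSum S (f j).2.2.1 m ω|}
      ≤ ENNReal.ofReal (ε/8 * (1/2:ℝ)^j) := fun j => (spec j).2.2.2.2.2.2.2
  -- the gliding-hump process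
  set H : ℝ → Ω → ℝ := fun t ω => ∑' i, (f i).1 * (f i).2.2.1 (clampf t) ω with hH_def
  have hsum : ∀ t ω, Summable (fun i => (f i).1 * (f i).2.2.1 (clampf t) ω) := by
    intro t ω
    refine Summable.of_norm_bounded summable_geometric_two fun i => ?_
    rw [Real.norm_eq_abs, abs_mul, abs_of_pos (ha0 i)]
    calc (f i).1 * |(f i).2.2.1 (clampf t) ω|
        ≤ (f i).1 * 1 := mul_le_mul_of_nonneg_left (hK1 i _ (clampf_mem t) ω) (ha0 i).le
      _ ≤ (1/2:ℝ)^i := by rw [mul_one]; exact ha2 i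
  have habs_le : ∀ (t : ℝ) (ω : Ω) (i : ℕ),
      |(f i).1 * (f i).2.2.1 (clampf t) ω| ≤ (1/2:ℝ)^i := by
    intro t ω i
    rw [abs_mul, abs_of_pos (ha0 i)]
    calc (f i).1 * |(f i).2.2.1 (clampf t) ω|
        ≤ (f i).1 * 1 := mul_le_mul_of_nonneg_left (hK1 i _ (clampf_mem t) ω) (ha0 i).le
      _ ≤ (1/2:ℝ)^i := by rw [mul_one]; exact ha2 i
  have hHbca : BddContAdapted ℱ H := by
    refine ⟨⟨2, fun t ht ω => ?_⟩, ?_, ?_⟩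
    · have hsn : Summable (fun i => ‖(f i).1 * (f i).2.2.1 (clampf t) ω‖) := by
        refine Summable.of_nonneg_of_le (fun i => norm_nonneg _)
          (fun i => ?_) summable_geometric_two
        rw [Real.norm_eq_abs]; exact habs_le t ω i
      have h1 : |H t ω| ≤ ∑' i, ‖(f i).1 * (f i).2.2.1 (clampf t) ω‖ := by
        rw [hH_def, ← Real.norm_eq_abs]
        exact norm_tsum_le_tsum_norm hsn
      have h2 : (∑' i, ‖(f i).1 * (f i).2.2.1 (clampf t) ω‖) ≤ ∑' i : ℕ, (1/2:ℝ)^i := by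
        refine Summable.tsum_le_tsum (fun i => ?_) hsn summable_geometric_two
        rw [Real.norm_eq_abs]; exact habs_le t ω i
      rw [tsum_geometric_two] at h2
      linarith
    · intro t ht
      have hct : clampf t = t := clampf_eq ht
      have hpart : ∀ N : ℕ, StronglyMeasurable[ℱ t]
          (fun ω => ∑ i ∈ Finset.range N, (f i).1 * (f i).2.2.1 (clampf t) ω) := by
        intro N
        refine Finset.stronglyMeasurable_fun_sum _ fun i _ => ?_
        rw [hct]
        exact stronglyMeasurable_const.mul ((hKbca i).2.1 t ht)
      refine stronglyMeasurable_of_tendsto atTop hpart (tendsto_pi_nhds.mpr fun ω => ?_)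
      exact (hsum t ω).hasSum.tendsto_sum_nat
    · intro ω
      refine continuousOn_tsum (u := fun i => (1/2:ℝ)^i) (fun i => ?_)
        summable_geometric_two (fun i t _ => ?_)
      · refine continuousOn_const.mul ?_
        exact ((hKbca i).2.2 ω).comp continuous_clampf.continuousOn
          fun t _ => clampf_mem t
      · rw [Real.norm_eq_abs]; exact habs_le t ω i
  obtain ⟨L, hT⟩ := hS_riemann H hHbca
  have hXm : ∀ m, Measurable (riemannSum S H m) := fun m =>
    measurable_riemannSum hSm (hKmeas H hHbca) m
  -- decomposition of the Riemann sums of H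
  have hdecomp : ∀ (j n : ℕ) (ω : Ω), riemannSum S H n ω
      = (∑ i ∈ Finset.range (j+1), (f i).1 * riemannSum S ((f i).2.2.1) n ω)
        + riemannSum S
          (fun t ω => ∑' m, (f (m+(j+1))).1 * (f (m+(j+1))).2.2.1 (clampf t) ω) n ω := by
    intro j n ω
    have h1 : riemannSum S H n ω = riemannSum S (fun t ω =>
        (∑ i ∈ Finset.range (j+1), (f i).1 * (f i).2.2.1 (clampf t) ω)
          + ∑' m, (f (m+(j+1))).1 * (f (m+(j+1))).2.2.1 (clampf t) ω) n ω := by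
      refine riemannSum_congr fun t ht => ?_
      exact (Summable.sum_add_tsum_nat_add (j+1) (hsum t ω)).symm
    rw [h1, riemannSum_add, riemannSum_sum]
    congr 1
    refine Finset.sum_congr rfl fun i _ => ?_
    congr 1
    exact riemannSum_congr fun t ht => by rw [clampf_eq ht]
  -- the key uniform estimate
  have key : ∀ j : ℕ, ENNReal.ofReal (ε/2)
      ≤ P {ω | (j:ℝ) ≤ |riemannSum S H ((f j).2.1) ω|} := by
    intro j
    have hPBad1 : P (⋃ i ∈ Finset.range j,
        {ω | (f i).2.2.2 ≤ |riemannSum S (f i).2.2.1 ((f j).2.1) ω|})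
        ≤ ENNReal.ofReal (ε/4) := by
      refine le_trans (measure_biUnion_finset_le _ _) ?_
      refine le_trans (Finset.sum_le_sum fun i _ => hB i ((f j).2.1)) ?_
      rw [← ENNReal.ofReal_sum_of_nonneg (fun i _ => by positivity)]
      refine ENNReal.ofReal_le_ofReal ?_
      have hg := sum_geometric_two_le j
      calc ∑ i ∈ Finset.range j, ε/8*(1/2:ℝ)^i
          = ε/8 * ∑ i ∈ Finset.range j, (1/(2:ℝ))^i := by
            rw [Finset.mul_sum]
        _ ≤ ε/8*2 := mul_le_mul_of_nonneg_left hg (by positivity)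
        _ = ε/4 := by ring
    have hPBad2 : P (⋃ m : ℕ,
        {ω | (1/2:ℝ)^(m+(j+1)) ≤ (f (m+(j+1))).1 * Vsum S ((f j).2.1) ω})
        ≤ ENNReal.ofReal (ε/4) := by
      refine le_trans (measure_iUnion_le _) ?_
      have hterm : ∀ m : ℕ, P {ω | (1/2:ℝ)^(m+(j+1)) ≤ (f (m+(j+1))).1 * Vsum S ((f j).2.1) ω}
          ≤ ENNReal.ofReal (ε/8*(1/2:ℝ)^(m+(j+1))) := fun m =>
        hA (m+(j+1)) j (by omega)
      refine le_trans (ENNReal.tsum_le_tsum hterm) ?_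
      have hsumm : Summable (fun m : ℕ => ε/8*(1/2:ℝ)^(m+(j+1))) := by
        refine ((summable_geometric_two.mul_left (ε/8*(1/2:ℝ)^(j+1)))).congr fun m => ?_
        rw [pow_add]; ring
      rw [← ENNReal.ofReal_tsum_of_nonneg (fun m => by positivity) hsumm]
      refine ENNReal.ofReal_le_ofReal ?_
      have hcg : ∀ m : ℕ, ε/8*(1/2:ℝ)^(m+(j+1)) = (ε/8*(1/2:ℝ)^(j+1)) * (1/(2:ℝ))^m :=
        fun m => by rw [pow_add]; ring
      rw [tsum_congr hcg, tsum_mul_left, tsum_geometric_two]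
      have h2 : (1/2:ℝ)^(j+1) ≤ 1/2 := by
        have h2a := pow_le_pow_of_le_one (show (0:ℝ) ≤ 1/2 by norm_num)
          (show (1/2:ℝ) ≤ 1 by norm_num) (show 1 ≤ j+1 by omega)
        simpa using h2a
      nlinarith [hε.le, pow_nonneg (by norm_num : (0:ℝ) ≤ 1/2) (j+1)]
    have hincl : {ω | ((j:ℝ) + 2 + ∑ i ∈ Finset.range j, (f i).1 * (f i).2.2.2)
            ≤ (f j).1 * |riemannSum S (f j).2.2.1 ((f j).2.1) ω|}
        ⊆ {ω | (j:ℝ) ≤ |riemannSum S H ((f j).2.1) ω|}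
          ∪ ((⋃ i ∈ Finset.range j,
              {ω | (f i).2.2.2 ≤ |riemannSum S (f i).2.2.1 ((f j).2.1) ω|})
            ∪ ⋃ m : ℕ,
              {ω | (1/2:ℝ)^(m+(j+1)) ≤ (f (m+(j+1))).1 * Vsum S ((f j).2.1) ω}) := by
      intro ω hωE
      by_cases hb1 : ω ∈ ⋃ i ∈ Finset.range j,
          {ω | (f i).2.2.2 ≤ |riemannSum S (f i).2.2.1 ((f j).2.1) ω|}
      · exact Or.inr (Or.inl hb1)
      by_cases hb2 : ω ∈ ⋃ m : ℕ,
          {ω | (1/2:ℝ)^(m+(j+1)) ≤ (f (m+(j+1))).1 * Vsum S ((f j).2.1) ω}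
      · exact Or.inr (Or.inr hb2)
      left
      simp only [Set.mem_setOf_eq] at hωE ⊢
      have hRi : ∀ i ∈ Finset.range j,
          |riemannSum S (f i).2.2.1 ((f j).2.1) ω| ≤ (f i).2.2.2 := by
        intro i hi
        by_contra hcon2
        push_neg at hcon2
        exact hb1 (Set.mem_biUnion hi (by
          simp only [Set.mem_setOf_eq]; exact hcon2.le))
      have hVm : ∀ m : ℕ, (f (m+(j+1))).1 * Vsum S ((f j).2.1) ω ≤ (1/2:ℝ)^(m+(j+1)) := by
        intro m
        by_contra hcon2
        push_neg at hcon2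
        exact hb2 (Set.mem_iUnion.mpr ⟨m, by
          simp only [Set.mem_setOf_eq]; exact hcon2.le⟩)
      -- tail estimate
      have hsuma : Summable (fun i : ℕ => (f i).1) :=
        Summable.of_nonneg_of_le (fun i => (ha0 i).le) ha2 summable_geometric_two
      have hsumash : Summable (fun m : ℕ => (f (m+(j+1))).1) :=
        (summable_nat_add_iff (j+1)).mpr hsuma
      have hTb : ∀ t ∈ Set.Icc (0:ℝ) 1, ∀ ω' : Ω,
          |(fun t ω' => ∑' m, (f (m+(j+1))).1 * (f (m+(j+1))).2.2.1 (clampf t) ω') t ω'|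
            ≤ ∑' m, (f (m+(j+1))).1 := by
        intro t ht ω'
        have hsn : Summable (fun m =>
            ‖(f (m+(j+1))).1 * (f (m+(j+1))).2.2.1 (clampf t) ω'‖) := by
          refine Summable.of_nonneg_of_le (fun m => norm_nonneg _) (fun m => ?_)
            ((summable_nat_add_iff (j+1)).mpr summable_geometric_two)
          rw [Real.norm_eq_abs]; exact habs_le t ω' (m+(j+1))
        refine le_trans ?_ (Summable.tsum_le_tsum (fun m => ?_) hsn hsumash)
        · rw [← Real.norm_eq_abs]
          exact norm_tsum_le_tsum_norm hsn
        · rw [Real.norm_eq_abs, abs_mul, abs_of_pos (ha0 _)]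
          calc (f (m+(j+1))).1 * |(f (m+(j+1))).2.2.1 (clampf t) ω'|
              ≤ (f (m+(j+1))).1 * 1 :=
                mul_le_mul_of_nonneg_left (hK1 _ _ (clampf_mem t) ω') (ha0 _).le
            _ = (f (m+(j+1))).1 := mul_one _
      have hRtail : |riemannSum S
          (fun t ω' => ∑' m, (f (m+(j+1))).1 * (f (m+(j+1))).2.2.1 (clampf t) ω')
          ((f j).2.1) ω| ≤ 1 := by
        have h1 := abs_riemannSum_le (S := S)
          (K := fun t ω' => ∑' m, (f (m+(j+1))).1 * (f (m+(j+1))).2.2.1 (clampf t) ω')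
          (n := (f j).2.1) (ω := ω) (fun t ht => hTb t ht ω)
        have h2 : (∑' m, (f (m+(j+1))).1) * Vsum S ((f j).2.1) ω ≤ 1 := by
          rw [← tsum_mul_right]
          have hsl : Summable (fun m : ℕ => (f (m+(j+1))).1 * Vsum S ((f j).2.1) ω) :=
            hsumash.mul_right _
          have h3 : (∑' m, (f (m+(j+1))).1 * Vsum S ((f j).2.1) ω)
              ≤ ∑' m : ℕ, (1/2:ℝ)^(m+(j+1)) :=
            Summable.tsum_le_tsum hVm hsl ((summable_nat_add_iff (j+1)).mpr summable_geometric_two)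
          have hcg : ∀ m : ℕ, (1/2:ℝ)^(m+(j+1)) = (1/2:ℝ)^(j+1) * (1/(2:ℝ))^m :=
            fun m => by rw [pow_add]; ring
          rw [tsum_congr hcg, tsum_mul_left, tsum_geometric_two] at h3
          have h5 : (1/2:ℝ)^(j+1) * 2 ≤ 1 := by
            have h5a := pow_le_pow_of_le_one (show (0:ℝ) ≤ 1/2 by norm_num)
              (show (1/2:ℝ) ≤ 1 by norm_num) (show 1 ≤ j+1 by omega)
            rw [pow_one] at h5a
            linarith
          linarith
        linarith
      have hpast : |∑ i ∈ Finset.range j, (f i).1 * riemannSum S (f i).2.2.1 ((f j).2.1) ω|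
          ≤ ∑ i ∈ Finset.range j, (f i).1 * (f i).2.2.2 := by
        refine le_trans (Finset.abs_sum_le_sum_abs _ _) (Finset.sum_le_sum fun i hi => ?_)
        rw [abs_mul, abs_of_pos (ha0 i)]
        exact mul_le_mul_of_nonneg_left (hRi i hi) (ha0 i).le
      have hq : (j:ℝ) + 2 + (∑ i ∈ Finset.range j, (f i).1 * (f i).2.2.2)
          ≤ |(f j).1 * riemannSum S (f j).2.2.1 ((f j).2.1) ω| := by
        rw [abs_mul, abs_of_pos (ha0 j)]
        exact hωE
      have hdec := hdecomp j ((f j).2.1) ω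
      rw [Finset.sum_range_succ] at hdec
      have hqle : |(f j).1 * riemannSum S (f j).2.2.1 ((f j).2.1) ω|
          ≤ |riemannSum S H ((f j).2.1) ω|
            + |∑ i ∈ Finset.range j, (f i).1 * riemannSum S (f i).2.2.1 ((f j).2.1) ω|
            + |riemannSum S
              (fun t ω' => ∑' m, (f (m+(j+1))).1 * (f (m+(j+1))).2.2.1 (clampf t) ω')
              ((f j).2.1) ω| := by
        have heq : (f j).1 * riemannSum S (f j).2.2.1 ((f j).2.1) ω
            = riemannSum S H ((f j).2.1) ω
              - (∑ i ∈ Finset.range j, (f i).1 * riemannSum S (f i).2.2.1 ((f j).2.1) ω)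
              - riemannSum S
                (fun t ω' => ∑' m, (f (m+(j+1))).1 * (f (m+(j+1))).2.2.1 (clampf t) ω')
                ((f j).2.1) ω := by
          rw [hdec]; ring
        rw [heq]
        calc |riemannSum S H ((f j).2.1) ω
              - (∑ i ∈ Finset.range j, (f i).1 * riemannSum S (f i).2.2.1 ((f j).2.1) ω)
              - riemannSum S
                (fun t ω' => ∑' m, (f (m+(j+1))).1 * (f (m+(j+1))).2.2.1 (clampf t) ω')
                ((f j).2.1) ω|
            ≤ |riemannSum S H ((f j).2.1) ω
              - (∑ i ∈ Finset.range j, (f i).1 * riemannSum S (f i).2.2.1 ((f j).2.1) ω)|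
              + |riemannSum S
                (fun t ω' => ∑' m, (f (m+(j+1))).1 * (f (m+(j+1))).2.2.1 (clampf t) ω')
                ((f j).2.1) ω| := abs_sub _ _
          _ ≤ _ := by
              have := abs_sub (riemannSum S H ((f j).2.1) ω)
                (∑ i ∈ Finset.range j, (f i).1 * riemannSum S (f i).2.2.1 ((f j).2.1) ω)
              linarith
      have hj0 : (0:ℝ) ≤ (j:ℝ) := Nat.cast_nonneg j
      linarith
    have hPE := hE j
    have hchain : P {ω | ((j:ℝ) + 2 + ∑ i ∈ Finset.range j, (f i).1 * (f i).2.2.2)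
            ≤ (f j).1 * |riemannSum S (f j).2.2.1 ((f j).2.1) ω|}
        ≤ P {ω | (j:ℝ) ≤ |riemannSum S H ((f j).2.1) ω|} + ENNReal.ofReal (ε/2) := by
      refine le_trans (measure_mono hincl) ?_
      refine le_trans (measure_union_le _ _) ?_
      refine add_le_add le_rfl ?_
      refine le_trans (measure_union_le _ _) ?_
      refine le_trans (add_le_add hPBad1 hPBad2) ?_
      rw [← ENNReal.ofReal_add (by positivity) (by positivity)]
      exact ENNReal.ofReal_le_ofReal (by linarith)
    have h7 : ENNReal.ofReal (ε/2) + ENNReal.ofReal (ε/2) = ENNReal.ofReal ε := by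
      rw [← ENNReal.ofReal_add (by positivity) (by positivity)]
      congr 1
      ring
    have h8 := lt_of_lt_of_le hPE hchain
    rw [← h7] at h8
    exact ((ENNReal.add_lt_add_iff_right ENNReal.ofReal_ne_top).mp h8).le
  -- conclusion: contradiction with convergence in probability
  have hLae : AEMeasurable L P := hT.aemeasurable fun m => (hXm m).aemeasurable
  have hnull : P {ω | ¬ (L ω = hLae.mk L ω)} = 0 := ae_iff.mp hLae.ae_eq_mk
  have hg1 : Tendsto (fun j : ℕ =>
      P {ω | (1:ℝ) ≤ dist (riemannSum S H ((f j).2.1) ω) (L ω)}) atTop (nhds 0) := by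
    have h1 := hT 1 one_pos
    have h2 : Tendsto (fun j => (f j).2.1) atTop atTop :=
      tendsto_atTop_mono hnj tendsto_id
    have h3 := h1.comp h2
    simp only [Function.comp_def, edist_dist, ENNReal.one_le_ofReal] at h3
    exact h3
  have hg2 : Tendsto (fun k : ℕ => P {ω | (k:ℝ) ≤ |hLae.mk L ω|}) atTop (nhds 0) :=
    tail_tendsto (P := P) hLae.measurable_mk
  have htot : Tendsto (fun j : ℕ =>
      P {ω | (1:ℝ) ≤ dist (riemannSum S H ((f (j+1)).2.1) ω) (L ω)}
        + P {ω | (j:ℝ) ≤ |hLae.mk L ω|}) atTop (nhds 0) := by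
    have h3 := (hg1.comp (tendsto_add_atTop_nat 1)).add hg2
    simpa using h3
  have hev := htot.eventually_lt_const
    (show (0:ℝ≥0∞) < ENNReal.ofReal (ε/2) from ENNReal.ofReal_pos.mpr (by positivity))
  rw [eventually_atTop] at hev
  obtain ⟨j0, hj0⟩ := hev
  have hcontra := key (j0+1)
  have hincl2 : {ω | ((j0+1:ℕ):ℝ) ≤ |riemannSum S H ((f (j0+1)).2.1) ω|} ⊆
      {ω | (1:ℝ) ≤ dist (riemannSum S H ((f (j0+1)).2.1) ω) (L ω)} ∪
        ({ω | (j0:ℝ) ≤ |hLae.mk L ω|} ∪ {ω | ¬ (L ω = hLae.mk L ω)}) := by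
    intro ω hω
    simp only [Set.mem_setOf_eq, Set.mem_union] at hω ⊢
    by_cases hd : (1:ℝ) ≤ dist (riemannSum S H ((f (j0+1)).2.1) ω) (L ω)
    · exact Or.inl hd
    push_neg at hd
    rw [Real.dist_eq] at hd
    by_cases hLL : L ω = hLae.mk L ω
    · refine Or.inr (Or.inl ?_)
      have h3 := abs_sub_abs_le_abs_sub (riemannSum S H ((f (j0+1)).2.1) ω) (L ω)
      rw [← hLL]
      push_cast at hω
      linarith
    · exact Or.inr (Or.inr hLL)
  have hP2 : P {ω | ((j0+1:ℕ):ℝ) ≤ |riemannSum S H ((f (j0+1)).2.1) ω|}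
      ≤ P {ω | (1:ℝ) ≤ dist (riemannSum S H ((f (j0+1)).2.1) ω) (L ω)}
        + (P {ω | (j0:ℝ) ≤ |hLae.mk L ω|} + P {ω | ¬ (L ω = hLae.mk L ω)}) :=
    le_trans (measure_mono hincl2) (le_trans (measure_union_le _ _)
      (add_le_add le_rfl (measure_union_le _ _)))
  rw [hnull, add_zero] at hP2
  have hfinal := lt_of_le_of_lt (le_trans hcontra hP2) (hj0 j0 le_rfl)
  exact absurd hfinal (lt_irrefl _)

end BD
end
end
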